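/- arXiv:cs/9811002 — 5 statements merged into one kernel-verified Lean document; each statement's English description precedes it below -/
import Mathlib

section
/- Kurosh–Ore theorem: let M be a modular lattice with least element ⊥, and let L = L₁ ⊔ L₂ ⊔ ⋯ ⊔ L_p = M₁ ⊔ M₂ ⊔ ⋯ ⊔ M_r be two representations of an element L as finite joins such that every component L_i and M_j is sup-irreducible and both representations are irredundant (omitting any single component from either representation strictly decreases the join). Then p = r, and for every index i there exists an index j such that L = L₁ ⊔ ⋯ ⊔ L_{i−1} ⊔ M_j ⊔ L_{i+1} ⊔ ⋯ ⊔ L_p. -/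
/-!
If `a` is sup-irreducible and `A` is any element, the modular law identifies the interval
`[a ⊓ A, a]` with `[A, a ⊔ A]`, so `a ⊔ A` cannot be the join of two elements of `[A, a ⊔ A]`
both strictly below it. Hence, whenever `L = L_i ⊔ A` with `A < L` and `L = M₁ ⊔ ⋯ ⊔ M_r`,
already some `M_j ⊔ A = L`. Exchanging the `L_i` one at a time for such `M_j` produces at most
`p` of the `M_j` with join `L`; by irredundancy these are all of them, so `r ≤ p`, and `p ≤ r`
by symmetry.
-/

/-- An element of a lattice with ⊥ is sup-irreducible if it is nonzero and
cannot be written as a join except trivially. -/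
def SupIrreducible {M : Type*} [Lattice M] [OrderBot M] (a : M) : Prop :=
  a ≠ ⊥ ∧ ∀ b c : M, a = b ⊔ c → a = b ∨ a = c

section Modular

variable {M : Type*} [Lattice M] [IsModularLattice M] [OrderBot M]

theorem SupIrreducible.eq_or_eq_of_sup_eq_sup {a A X Y : M} (ha : SupIrreducible a)
    (hX : A ≤ X) (hY : A ≤ Y) (hXY : X ⊔ Y = a ⊔ A) : X = a ⊔ A ∨ Y = a ⊔ A := by
  have restore : ∀ Z, A ≤ Z → Z ≤ a ⊔ A → Z ⊓ a ⊔ A = Z := fun Z hAZ hZ => by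
    rw [inf_sup_assoc_of_le a hAZ, inf_eq_left.2 hZ]
  have hXL : X ≤ a ⊔ A := hXY ▸ le_sup_left
  have hYL : Y ≤ a ⊔ A := hXY ▸ le_sup_right
  have hsplit : a = X ⊓ a ⊔ Y ⊓ a := calc
    a = (a ⊔ A) ⊓ a := (inf_eq_right.2 le_sup_left).symm
    _ = (X ⊓ a ⊔ Y ⊓ a ⊔ A) ⊓ a := by
      rw [sup_sup_distrib_right, restore X hX hXL, restore Y hY hYL, hXY]
    _ = X ⊓ a ⊔ Y ⊓ a ⊔ A ⊓ a := sup_inf_assoc_of_le A (sup_le inf_le_right inf_le_right)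
    _ = X ⊓ a ⊔ Y ⊓ a :=
      sup_eq_left.2 ((inf_le_inf_right a hX).trans le_sup_left)
  have absorb : ∀ Z, A ≤ Z → Z ≤ a ⊔ A → a = Z ⊓ a → Z = a ⊔ A := fun Z hAZ hZ h =>
    hZ.antisymm (sup_le (h.le.trans inf_le_left) hAZ)
  exact (ha.2 _ _ hsplit).imp (absorb X hX hXL) (absorb Y hY hYL)

theorem SupIrreducible.exists_mem_sup_eq {ι : Type*} {a A L : M} (ha : SupIrreducible a)
    (hL : a ⊔ A = L) (hA : A ≠ L) {f : ι → M} {s : Finset ι} (hs : s.sup f ⊔ A = L) :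
    ∃ j ∈ s, f j ⊔ A = L := by
  classical
  subst hL
  induction s using Finset.induction_on with
  | empty => exact absurd (by simpa using hs) hA
  | insert j s _ ih =>
    rw [Finset.sup_insert, sup_sup_distrib_right] at hs
    rcases ha.eq_or_eq_of_sup_eq_sup le_sup_right le_sup_right hs with hj | hs'
    · exact ⟨j, Finset.mem_insert_self j s, hj⟩
    · obtain ⟨k, hk, hkA⟩ := ih hs'
      exact ⟨k, Finset.mem_insert_of_mem hk, hkA⟩

theorem Finset.exists_subset_sup_eq_card_le {ι κ : Type*} {f : ι → M} {g : κ → M}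
    {s : Finset ι} {t : Finset κ} {L : M} (hf : ∀ i ∈ s, SupIrreducible (f i))
    (ht : t.sup g = L) {J : Finset κ} (hJ : J ⊆ t) (hJs : J.sup g ⊔ s.sup f = L) :
    ∃ J' ⊆ t, J'.sup g = L ∧ J'.card ≤ J.card + s.card := by
  classical
  induction s using Finset.induction_on generalizing J with
  | empty => exact ⟨J, hJ, by simpa using hJs, by simp⟩
  | insert i s hi ih =>
    have hf' : ∀ i ∈ s, SupIrreducible (f i) := fun i' hi' => hf i' (mem_insert_of_mem hi')
    set A := J.sup g ⊔ s.sup f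
    have hL : f i ⊔ A = L := by
      rw [← hJs, sup_insert]
      exact sup_left_comm _ _ _
    rw [card_insert_of_notMem hi]
    by_cases hAL : A = L
    · obtain ⟨J', hJ't, hJ'L, hcard⟩ := ih hf' hJ hAL
      exact ⟨J', hJ't, hJ'L, by omega⟩
    · obtain ⟨k, hk, hkA⟩ := (hf i (mem_insert_self i s)).exists_mem_sup_eq (s := t) hL hAL
        (by rw [ht, sup_eq_left.2 (hL ▸ le_sup_right)])
      obtain ⟨J', hJ't, hJ'L, hcard⟩ := ih hf' (insert_subset hk hJ)
        (by rw [sup_insert, sup_assoc, hkA])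
      exact ⟨J', hJ't, hJ'L, by have := card_insert_le k J; omega⟩

theorem Finset.card_le_card_of_sup_eq {ι κ : Type*} [DecidableEq κ] {f : ι → M} {g : κ → M}
    {s : Finset ι} {t : Finset κ} {L : M} (hf : ∀ i ∈ s, SupIrreducible (f i))
    (hs : s.sup f = L) (ht : t.sup g = L) (hg : ∀ j ∈ t, (t.erase j).sup g < L) :
    t.card ≤ s.card := by
  obtain ⟨J, hJt, hJL, hcard⟩ :=
    exists_subset_sup_eq_card_le hf ht (empty_subset t) (by simpa using hs)
  suffices J = t by simpa [this] using hcard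
  by_contra hne
  obtain ⟨j, hj, hjJ⟩ := exists_of_ssubset (hJt.ssubset_of_ne hne)
  exact (hg j hj).not_ge (hJL ▸ sup_mono (subset_erase.2 ⟨hJt, hjJ⟩))

end Modular

/-- Kurosh–Ore theorem: in a modular lattice with ⊥, two irredundant
representations of `L` as finite joins of sup-irreducible elements have the
same number of components, and each component of the first representation can
be replaced by a suitable component of the second. -/
theorem kurosh_ore
    {M : Type*} [Lattice M] [IsModularLattice M] [OrderBot M]
    (L : M) (p r : ℕ)
    (Lf : Fin p → M) (Mf : Fin r → M)
    (hLsup : Finset.univ.sup Lf = L)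
    (hMsup : Finset.univ.sup Mf = L)
    (hLirr : ∀ i, SupIrreducible (Lf i))
    (hMirr : ∀ j, SupIrreducible (Mf j))
    (hLnoncanc : ∀ i : Fin p, (Finset.univ.erase i).sup Lf < L)
    (hMnoncanc : ∀ j : Fin r, (Finset.univ.erase j).sup Mf < L) :
    p = r ∧ ∀ i : Fin p, ∃ j : Fin r, Mf j ⊔ (Finset.univ.erase i).sup Lf = L := by
  refine ⟨?_, fun i => ?_⟩
  · have hrp := Finset.card_le_card_of_sup_eq (fun i _ => hLirr i) hLsup hMsup
      (fun j _ => hMnoncanc j)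
    have hpr := Finset.card_le_card_of_sup_eq (fun j _ => hMirr j) hMsup hLsup
      (fun i _ => hLnoncanc i)
    simp only [Finset.card_univ, Fintype.card_fin] at hrp hpr
    omega
  · have hsplit : Lf i ⊔ (Finset.univ.erase i).sup Lf = L := by
      rw [← Finset.sup_insert, Finset.insert_erase (Finset.mem_univ i), hLsup]
    obtain ⟨j, -, hj⟩ := (hLirr i).exists_mem_sup_eq hsplit (hLnoncanc i).ne
      (by rw [hMsup, sup_eq_left.2 (hLnoncanc i).le])
    exact ⟨j, hj⟩
end

section
/- Ore's theorem on direct decompositions: let M be a modular lattice with least element ⊥ and let L ∈ M admit a finite maximal chain ⊥ = a₀ ⋖ a₁ ⋖ ⋯ ⋖ a_n = L. Suppose L = L₁ ⊕ ⋯ ⊕ L_k = M₁ ⊕ ⋯ ⊕ M_r are two direct join-decompositions of L, i.e. each family is independent (every component meets the join of the remaining components of its family in ⊥) and every component is directly indecomposable. Then k = r, and for every index i there exists an index j such that L = L₁ ⊕ ⋯ ⊕ L_{i−1} ⊕ M_j ⊕ L_{i+1} ⊕ ⋯ ⊕ L_k is again a direct join-decomposition of L. -/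
/-- A finite family in a lattice with ⊥ is independent if each member meets
the join of the remaining members in ⊥. -/
def IndepFamily {M : Type*} [Lattice M] [OrderBot M] {k : ℕ} (f : Fin k → M) : Prop :=
  ∀ i : Fin k, f i ⊓ (Finset.univ.erase i).sup f = ⊥

/-- An element is directly indecomposable if it is nonzero and is not the join
of two nonzero elements meeting in ⊥. -/
def DirectlyIndecomposable {M : Type*} [Lattice M] [OrderBot M] (a : M) : Prop :=
  a ≠ ⊥ ∧ ¬ ∃ b c : M, b ≠ ⊥ ∧ c ≠ ⊥ ∧ b ⊓ c = ⊥ ∧ a = b ⊔ c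

set_option linter.unusedSectionVars false


namespace OreProof

variable {M : Type*} [Lattice M] [IsModularLattice M]

/-- `Rk x y n` : there is a maximal (covering) chain of length `n` from `x` to `y`. -/
inductive Rk : M → M → ℕ → Prop
  | refl (x : M) : Rk x x 0
  | step {x y z : M} {n : ℕ} : x ⋖ y → Rk y z n → Rk x z (n + 1)

lemma Rk.le {x y : M} {n : ℕ} (h : Rk x y n) : x ≤ y := by
  induction h with
  | refl => exact le_rfl
  | step h _ ih => exact h.le.trans ih

lemma Rk.zero_of_eq {x y : M} {n : ℕ} (h : Rk x y n) (hxy : x = y) : n = 0 := by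
  cases h with
  | refl => rfl
  | step hc hr => exact absurd (hxy ▸ lt_of_lt_of_le hc.lt hr.le) (lt_irrefl _)

lemma Rk.eq_of_zero {x y : M} (h : Rk x y 0) : x = y := by
  cases h; rfl

lemma Rk.trans {x y z : M} {p q : ℕ} (h1 : Rk x y p) (h2 : Rk y z q) : Rk x z (p + q) := by
  induction h1 with
  | refl => simpa using h2
  | step hc hr ih =>
    have := Rk.step hc (ih h2)
    convert this using 1
    omega

lemma covBy_sup_or_eq {x y : M} (v : M) (h : x ⋖ y) :
    x ⊔ v = y ⊔ v ∨ (x ⊔ v) ⋖ (y ⊔ v) := by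
  by_cases hxy : x ⊔ v = y ⊔ v
  · exact Or.inl hxy
  · right
    have hle : x ⊔ v ≤ y ⊔ v := sup_le_sup_right h.le _
    refine ⟨lt_of_le_of_ne hle hxy, ?_⟩
    intro w hw1 hw2
    have hxw : x ≤ w := le_trans le_sup_left hw1.le
    have hxyw : x ≤ y ⊓ w := le_inf h.le hxw
    have hcase : y ⊓ w = x ∨ y ⊓ w = y := by
      rcases eq_or_lt_of_le hxyw with h' | h'
      · exact Or.inl h'.symm
      · right
        by_contra hne
        exact h.2 h' (lt_of_le_of_ne inf_le_left hne)
    rcases hcase with hc | hc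
    · have hmod : ((x ⊔ v) ⊔ y) ⊓ w = (x ⊔ v) ⊔ (y ⊓ w) :=
        sup_inf_assoc_of_le y hw1.le
      have h1 : ((x ⊔ v) ⊔ y) ⊓ w = w := by
        refine inf_eq_right.mpr (le_trans hw2.le (sup_le le_sup_right ?_))
        exact le_trans le_sup_right le_sup_left
      have h2 : w = x ⊔ v := by
        rw [← h1, hmod, hc]
        exact sup_eq_left.mpr le_sup_left
      exact absurd hw1 (by rw [h2]; exact lt_irrefl _)
    · have hyw : y ⊔ v ≤ w := sup_le (by rw [← hc]; exact inf_le_right)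
        (le_trans le_sup_right hw1.le)
      exact absurd hyw hw2.not_ge

lemma covBy_inf_or_eq {x y : M} (v : M) (h : x ⋖ y) :
    x ⊓ v = y ⊓ v ∨ (x ⊓ v) ⋖ (y ⊓ v) := by
  by_cases hxy : x ⊓ v = y ⊓ v
  · exact Or.inl hxy
  · right
    have hle : x ⊓ v ≤ y ⊓ v := inf_le_inf_right _ h.le
    refine ⟨lt_of_le_of_ne hle hxy, ?_⟩
    intro w hw1 hw2
    have hwy : w ≤ y := le_trans hw2.le inf_le_left
    have hwv : w ≤ v := le_trans hw2.le inf_le_right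
    have hcase : x ⊔ w = x ∨ x ⊔ w = y := by
      rcases eq_or_lt_of_le (le_sup_left : x ≤ x ⊔ w) with h' | h'
      · exact Or.inl h'.symm
      · right
        have hxy' : x ⊔ w ≤ y := sup_le h.le hwy
        rcases eq_or_lt_of_le hxy' with h2 | h2
        · exact h2
        · exact absurd h2 (h.2 h')
    rcases hcase with hc | hc
    · have : w ≤ x ⊓ v := le_inf (le_trans le_sup_right hc.le) hwv
      exact absurd this hw1.not_ge
    · have hmod : (w ⊔ x) ⊓ v = w ⊔ (x ⊓ v) := sup_inf_assoc_of_le x hwv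
      have h1 : w ⊔ x = y := by rw [sup_comm]; exact hc
      have h2 : w ⊔ (x ⊓ v) = w := sup_eq_left.mpr hw1.le
      have : y ⊓ v = w := by rw [← h1, hmod, h2]
      exact absurd hw2 (by rw [this]; exact lt_irrefl _)

lemma covBy_of_covBy_covBy {x a b : M} (h1 : x ⋖ a) (h2 : x ⋖ b) (hne : a ≠ b) :
    b ⋖ a ⊔ b := by
  rcases covBy_sup_or_eq b h1 with he | hc
  · -- x ⊔ b = a ⊔ b, i.e. b = a ⊔ b, so a ≤ b
    rw [sup_eq_right.mpr h2.le] at he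
    have hab2 : a ≤ b := le_trans le_sup_left he.ge
    rcases eq_or_lt_of_le hab2 with h' | h'
    · exact absurd h' hne
    · exact absurd h' (h2.2 h1.lt)
  · rwa [sup_eq_right.mpr h2.le] at hc

lemma Rk.sup_map {x y : M} {n : ℕ} (h : Rk x y n) (v : M) :
    ∃ m ≤ n, Rk (x ⊔ v) (y ⊔ v) m := by
  induction h with
  | refl x => exact ⟨0, le_rfl, Rk.refl _⟩
  | step hc hr ih =>
    obtain ⟨m, hm, hrm⟩ := ih
    rcases covBy_sup_or_eq v hc with he | hcc
    · exact ⟨m, by omega, he ▸ hrm⟩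
    · exact ⟨m + 1, by omega, Rk.step hcc hrm⟩

lemma Rk.inf_map {x y : M} {n : ℕ} (h : Rk x y n) (v : M) :
    ∃ m ≤ n, Rk (x ⊓ v) (y ⊓ v) m := by
  induction h with
  | refl x => exact ⟨0, le_rfl, Rk.refl _⟩
  | step hc hr ih =>
    obtain ⟨m, hm, hrm⟩ := ih
    rcases covBy_inf_or_eq v hc with he | hcc
    · exact ⟨m, by omega, he ▸ hrm⟩
    · exact ⟨m + 1, by omega, Rk.step hcc hrm⟩

lemma Rk.unique : ∀ {n : ℕ} {x y : M} {m : ℕ}, Rk x y n → Rk x y m → n = m := by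
  intro n
  induction n using Nat.strong_induction_on with
  | _ n ih =>
    intro x y m h1 h2
    cases h1 with
    | refl => exact (h2.zero_of_eq rfl).symm
    | @step _ a _ n0 hxa hay =>
      cases h2 with
      | refl => exact absurd (lt_of_lt_of_le hxa.lt hay.le) (lt_irrefl _)
      | @step _ b _ m0 hxb hby =>
        by_cases hab : a = b
        · subst hab
          have := ih n0 (by omega) hay hby
          omega
        · have hbs : b ⋖ a ⊔ b := covBy_of_covBy_covBy hxa hxb hab
          have has : a ⋖ a ⊔ b := by
            rw [sup_comm]
            exact covBy_of_covBy_covBy hxb hxa (Ne.symm hab)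
          obtain ⟨t, ht, hrt⟩ := hay.sup_map b
          rw [sup_eq_left.mpr hby.le] at hrt
          -- hrt : Rk (a ⊔ b) y t
          have h3 : Rk a y (t + 1) := Rk.step has hrt
          have h4 : n0 = t + 1 := ih n0 (by omega) hay h3
          have h5 : Rk b y (t + 1) := Rk.step hbs hrt
          have h6 : t + 1 = m0 := ih (t + 1) (by omega) h5 hby
          omega

/-- A dimension (rank) function on the interval `[⊥, L]`. -/
structure DimFn {M : Type*} [Lattice M] [OrderBot M] (L : M) (δ : M → ℕ) : Prop where
  bot : δ ⊥ = 0
  val : ∀ {x y : M}, x ≤ L → y ≤ L → δ (x ⊔ y) + δ (x ⊓ y) = δ x + δ y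
  strict : ∀ {x y : M}, x < y → y ≤ L → δ x < δ y

section DimConstruction

variable {M : Type*} [Lattice M] [IsModularLattice M] [OrderBot M] {L : M} {n : ℕ}

open Classical in
noncomputable def dimOf (L : M) : M → ℕ := fun x =>
  if h : ∃ m, Rk (⊥ : M) x m then h.choose else 0

lemma dimOf_spec {x : M} {m : ℕ} (h : Rk (⊥ : M) x m) : dimOf L x = m := by
  rw [dimOf, dif_pos ⟨m, h⟩]
  exact Rk.unique (Exists.choose_spec (⟨m, h⟩ : ∃ m, Rk (⊥ : M) x m)) h

lemma exists_rk_bot (hn : Rk (⊥ : M) L n) {x : M} (hx : x ≤ L) : ∃ m, Rk (⊥ : M) x m := by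
  obtain ⟨m, _, hm⟩ := hn.inf_map x
  rw [bot_inf_eq, inf_eq_right.mpr hx] at hm
  exact ⟨m, hm⟩

lemma dimOf_rk (hn : Rk (⊥ : M) L n) {x : M} (hx : x ≤ L) : Rk (⊥ : M) x (dimOf L x) := by
  obtain ⟨m, hm⟩ := exists_rk_bot hn hx
  rwa [dimOf_spec hm]

lemma exists_rk (hn : Rk (⊥ : M) L n) {x y : M} (hxy : x ≤ y) (hy : y ≤ L) :
    ∃ m, Rk x y m ∧ dimOf L y = dimOf L x + m := by
  obtain ⟨m0, hm0⟩ := exists_rk_bot hn hy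
  obtain ⟨m, _, hm⟩ := hm0.sup_map x
  rw [bot_sup_eq, sup_eq_left.mpr hxy] at hm
  refine ⟨m, hm, ?_⟩
  have hx : x ≤ L := hxy.trans hy
  have := (dimOf_rk hn hx).trans hm
  exact dimOf_spec this

lemma dimfn_of_rk (hn : Rk (⊥ : M) L n) : DimFn L (dimOf L) := by
  constructor
  · exact dimOf_spec (Rk.refl _)
  · intro x y hx hy
    have hxyL : x ⊔ y ≤ L := sup_le hx hy
    -- chain from x⊓y to x, mapped by ⊔ y
    obtain ⟨k, hk, hkd⟩ := exists_rk hn (inf_le_left : x ⊓ y ≤ x) hx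
    obtain ⟨t, ht, hrt⟩ := hk.sup_map y
    rw [sup_eq_right.mpr (inf_le_right : x ⊓ y ≤ y)] at hrt
    -- hrt : Rk y (x ⊔ y) t  (since (x⊓y)⊔y = y)
    have h1 : dimOf L (x ⊔ y) = dimOf L y + t :=
      dimOf_spec ((dimOf_rk hn hy).trans hrt)
    -- chain from y to x ⊔ y, mapped by ⊓ x
    obtain ⟨s, hs, hsd⟩ := exists_rk hn (le_sup_right : y ≤ x ⊔ y) hxyL
    obtain ⟨t', ht', hrt'⟩ := hs.inf_map x
    rw [inf_comm y x, inf_eq_right.mpr (le_sup_left : x ≤ x ⊔ y)] at hrt'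
    -- hrt' : Rk (x ⊓ y) x t'
    have h2 : dimOf L x = dimOf L (x ⊓ y) + t' :=
      dimOf_spec ((dimOf_rk hn (le_trans inf_le_left hx)).trans hrt')
    omega
  · intro x y hxy hy
    obtain ⟨m, hm, hmd⟩ := exists_rk hn hxy.le hy
    have : m ≠ 0 := fun h0 => absurd (h0 ▸ hm).eq_of_zero (ne_of_lt hxy)
    omega

end DimConstruction

section Core

variable {M : Type*} [Lattice M] [IsModularLattice M] [OrderBot M] {L : M} {δ : M → ℕ}

namespace DimFn

lemma mono (hd : DimFn L δ) {x y : M} (hxy : x ≤ y) (hy : y ≤ L) : δ x ≤ δ y := by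
  rcases eq_or_lt_of_le hxy with h | h
  · exact h ▸ le_rfl
  · exact (hd.strict h hy).le

lemma eq_of (hd : DimFn L δ) {x y : M} (hxy : x ≤ y) (hy : y ≤ L) (hδ : δ y ≤ δ x) : x = y := by
  rcases eq_or_lt_of_le hxy with h | h
  · exact h
  · exact absurd (hd.strict h hy) (not_lt.mpr hδ)

lemma bot_of (hd : DimFn L δ) {x : M} (hx : x ≤ L) (hδ : δ x = 0) : x = ⊥ := by
  have h2 := hd.eq_of (bot_le : (⊥:M) ≤ x) hx (by rw [hδ, hd.bot])
  exact h2.symm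

end DimFn

/-- Relative indecomposability on the interval `[z, a]`. -/
def RIndec (z a : M) : Prop :=
  z < a ∧ ∀ x y : M, z ≤ x → z ≤ y → x ⊓ y = z → x ⊔ y = a → x = z ∨ y = z

/-- Transfer of relative indecomposability along a pair of mutually inverse
monotone maps between intervals. -/
lemma RIndec.transfer {z a z' a' : M} (σ σ' : M → M)
    (hσm : Monotone σ) (hσ'm : Monotone σ')
    (hσz : σ z = z') (hσa : σ a = a')
    (hinv : ∀ t, z ≤ t → t ≤ a → σ' (σ t) = t)
    (hinv' : ∀ t, z' ≤ t → t ≤ a' → σ (σ' t) = t)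
    (hrange : ∀ t, z ≤ t → t ≤ a → z' ≤ σ t ∧ σ t ≤ a')
    (hrange' : ∀ t, z' ≤ t → t ≤ a' → z ≤ σ' t ∧ σ' t ≤ a)
    (h : RIndec z a) : RIndec z' a' := by
  obtain ⟨hlt, hmain⟩ := h
  have hσ'z : σ' z' = z := by rw [← hσz, hinv z le_rfl hlt.le]
  have hσ'a : σ' a' = a := by rw [← hσa, hinv a hlt.le le_rfl]
  constructor
  · have hle : z' ≤ a' := by rw [← hσz, ← hσa]; exact hσm hlt.le
    rcases eq_or_lt_of_le hle with heq | hlt2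
    · exfalso
      have h2 : z = a := by
        have h3 := congrArg σ' heq
        rwa [← hσz, ← hσa, hinv z le_rfl hlt.le, hinv a hlt.le le_rfl] at h3
      exact absurd h2 (ne_of_lt hlt)
    · exact hlt2
  · intro x' y' hzx' hzy' hixy hsxy
    have hx'a : x' ≤ a' := hsxy ▸ le_sup_left
    have hy'a : y' ≤ a' := hsxy ▸ le_sup_right
    set x := σ' x' with hxdef
    set y := σ' y' with hydef
    obtain ⟨hzx, hxa⟩ := hrange' x' hzx' hx'a
    obtain ⟨hzy, hya⟩ := hrange' y' hzy' hy'a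
    have hxy_i : x ⊓ y = z := by
      have h1 : σ (x ⊓ y) ≤ z' := by
        have hxyz : z ≤ x ⊓ y := le_inf hzx hzy
        have hxya : x ⊓ y ≤ a := inf_le_left.trans hxa
        have hs1 : σ (x ⊓ y) ≤ x' := by
          calc σ (x ⊓ y) ≤ σ x := hσm inf_le_left
          _ = x' := hinv' x' hzx' hx'a
        have hs2 : σ (x ⊓ y) ≤ y' := by
          calc σ (x ⊓ y) ≤ σ y := hσm inf_le_right
          _ = y' := hinv' y' hzy' hy'a
        rw [← hixy]; exact le_inf hs1 hs2
      have hxyz : z ≤ x ⊓ y := le_inf hzx hzy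
      have hxya : x ⊓ y ≤ a := inf_le_left.trans hxa
      have := hσ'm h1
      rw [hinv _ hxyz hxya, hσ'z] at this
      exact le_antisymm this hxyz
    have hxy_s : x ⊔ y = a := by
      have hxyz : z ≤ x ⊔ y := hzx.trans le_sup_left
      have hxya : x ⊔ y ≤ a := sup_le hxa hya
      have h1 : a' ≤ σ (x ⊔ y) := by
        rw [← hsxy]
        refine sup_le ?_ ?_
        · rw [← hinv' x' hzx' hx'a]; exact hσm le_sup_left
        · rw [← hinv' y' hzy' hy'a]; exact hσm le_sup_right
      have h2 : σ (x ⊔ y) = a' := le_antisymm ((hrange _ hxyz hxya).2) h1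
      have := congrArg σ' h2
      rwa [hinv _ hxyz hxya, hσ'a] at this
    rcases hmain x y hzx hzy hxy_i hxy_s with h' | h'
    · left
      rw [← hinv' x' hzx' hx'a, ← hxdef, h', hσz]
    · right
      rw [← hinv' y' hzy' hy'a, ← hydef, h', hσz]

section Config

variable {M : Type*} [Lattice M] [IsModularLattice M] [OrderBot M] {L : M} {δ : M → ℕ}
variable {z u a b c e : M}

/-- The "t-lemma": any `t` in `[z,u]` is below the join of its two projections
into the direct decomposition `u = c ⊕ e`. -/
lemma t_le (hd : DimFn L δ) (huL : u ≤ L) (hzc : z ≤ c) (hze : z ≤ e)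
    (hce_i : c ⊓ e = z) (hce_s : c ⊔ e = u) {t : M} (hzt : z ≤ t) (htu : t ≤ u) :
    t ≤ (c ⊓ (e ⊔ t)) ⊔ (e ⊓ (c ⊔ t)) := by
  have hcu : c ≤ u := hce_s ▸ le_sup_left
  have heu : e ≤ u := hce_s ▸ le_sup_right
  have hcL : c ≤ L := hcu.trans huL
  have heL : e ≤ L := heu.trans huL
  have htL : t ≤ L := htu.trans huL
  have hzL : z ≤ L := hzt.trans htL
  set ct := c ⊓ (e ⊔ t) with hct
  set dt := e ⊓ (c ⊔ t) with hdt
  set A := (c ⊔ t) ⊓ (e ⊔ t) with hA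
  have hzct : z ≤ ct := le_inf hzc (hze.trans le_sup_left)
  have hzdt : z ≤ dt := le_inf hze (hzc.trans le_sup_left)
  have hctL : ct ≤ L := (inf_le_left.trans hcu).trans huL
  have hdtL : dt ≤ L := (inf_le_left.trans heu).trans huL
  have hAL : A ≤ L := le_trans (inf_le_right.trans (sup_le heu htu)) huL
  have hctdt : ct ⊓ dt = z := by
    refine le_antisymm ?_ (le_inf hzct hzdt)
    rw [← hce_i]; exact inf_le_inf inf_le_left inf_le_left
  have hjoin1 : c ⊔ (e ⊔ t) = u := by
    refine le_antisymm (sup_le hcu (sup_le heu htu)) ?_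
    rw [← hce_s]; exact sup_le le_sup_left (le_sup_left.trans le_sup_right)
  have hjoin2 : e ⊔ (c ⊔ t) = u := by
    refine le_antisymm (sup_le heu (sup_le hcu htu)) ?_
    rw [← hce_s]; exact sup_le (le_sup_left.trans le_sup_right) le_sup_left
  have hjoin3 : (c ⊔ t) ⊔ (e ⊔ t) = u := by
    refine le_antisymm (sup_le (sup_le hcu htu) (sup_le heu htu)) ?_
    rw [← hce_s]
    exact sup_le (le_sup_left.trans le_sup_left) (le_sup_left.trans le_sup_right)
  -- modular identities
  have h1 : t ⊔ ct = A := by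
    rw [hct, hA, sup_comm c t]
    exact (sup_inf_assoc_of_le c (le_sup_right : t ≤ e ⊔ t)).symm ▸
      (by rw [← sup_inf_assoc_of_le c (le_sup_right : t ≤ e ⊔ t), sup_comm t c])
  have hdtA : dt ≤ A := le_inf inf_le_right (inf_le_left.trans le_sup_left)
  have hctA : ct ≤ A := le_inf (inf_le_left.trans le_sup_left) inf_le_right
  have h2 : t ⊔ ct ⊔ dt = A := by rw [h1]; exact sup_eq_left.mpr hdtA
  -- dimension count
  have ev1 : δ u + δ ct = δ c + δ (e ⊔ t) := by
    have := hd.val hcL (le_trans (sup_le heu htu) huL)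
    rwa [hjoin1, ← hct] at this
  have ev2 : δ u + δ dt = δ e + δ (c ⊔ t) := by
    have := hd.val heL (le_trans (sup_le hcu htu) huL)
    rwa [hjoin2, ← hdt] at this
  have ev3 : δ (ct ⊔ dt) + δ z = δ ct + δ dt := by
    have := hd.val hctL hdtL
    rwa [hctdt] at this
  have ev4 : δ u + δ A = δ (c ⊔ t) + δ (e ⊔ t) := by
    have := hd.val (le_trans (sup_le hcu htu) huL) (le_trans (sup_le heu htu) huL)
    rwa [hjoin3, ← hA] at this
  have ev5 : δ u + δ z = δ c + δ e := by
    have := hd.val hcL heL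
    rwa [hce_s, hce_i] at this
  have hdim : δ A ≤ δ (ct ⊔ dt) := by omega
  have heq : ct ⊔ dt = A := hd.eq_of (sup_le hctA hdtA) hAL hdim
  rw [heq]
  exact le_inf le_sup_right le_sup_right

/-- Pointwise surjectivity of the pair of projections ("Lemma P"):
for `u = a ⊕ b = c ⊕ e` and `t ≤ a`, `t` is below the join of the images of
its two round-trip projections through `c` and `e`. -/
lemma P_le (hd : DimFn L δ) (huL : u ≤ L)
    (hza : z ≤ a) (hzb : z ≤ b) (hzc : z ≤ c) (hze : z ≤ e)
    (hab_i : a ⊓ b = z) (hab_s : a ⊔ b = u)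
    (hce_i : c ⊓ e = z) (hce_s : c ⊔ e = u)
    {t : M} (hzt : z ≤ t) (hta : t ≤ a) :
    t ≤ (a ⊓ (b ⊔ (c ⊓ (e ⊔ t)))) ⊔ (a ⊓ (b ⊔ (e ⊓ (c ⊔ t)))) := by
  have hau : a ≤ u := hab_s ▸ le_sup_left
  have hbu : b ≤ u := hab_s ▸ le_sup_right
  have hcu : c ≤ u := hce_s ▸ le_sup_left
  have heu : e ≤ u := hce_s ▸ le_sup_right
  have haL : a ≤ L := hau.trans huL
  have hbL : b ≤ L := hbu.trans huL
  have hcL : c ≤ L := hcu.trans huL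
  have heL : e ≤ L := heu.trans huL
  have htu : t ≤ u := hta.trans hau
  have htL : t ≤ L := htu.trans huL
  have hzL : z ≤ L := hzt.trans htL
  set ct := c ⊓ (e ⊔ t) with hctdef
  set dt := e ⊓ (c ⊔ t) with hdtdef
  set s' := ct ⊔ dt with hs'def
  set hh := (b ⊔ ct) ⊓ (b ⊔ dt) with hhdef
  set X := a ⊓ (b ⊔ ct) with hXdef
  set Y := a ⊓ (b ⊔ dt) with hYdef
  have hctu : ct ≤ u := inf_le_left.trans hcu
  have hdtu : dt ≤ u := inf_le_left.trans heu
  have hs'u : s' ≤ u := sup_le hctu hdtu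
  have hzct : z ≤ ct := le_inf hzc (hze.trans le_sup_left)
  have hzdt : z ≤ dt := le_inf hze (hzc.trans le_sup_left)
  have hctL : ct ≤ L := hctu.trans huL
  have hdtL : dt ≤ L := hdtu.trans huL
  have hctdt : ct ⊓ dt = z := by
    refine le_antisymm ?_ (le_inf hzct hzdt)
    rw [← hce_i]; exact inf_le_inf inf_le_left inf_le_left
  have hts' : t ≤ s' := t_le hd huL hzc hze hce_i hce_s hzt htu
  have htLHS : t ≤ a ⊓ (b ⊔ s') := le_inf hta (hts'.trans le_sup_right)
  have hRHSle : X ⊔ Y ≤ a ⊓ (b ⊔ s') := by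
    refine sup_le (le_inf inf_le_left ?_) (le_inf inf_le_left ?_)
    · exact inf_le_right.trans (sup_le_sup_left le_sup_left _)
    · exact inf_le_right.trans (sup_le_sup_left le_sup_right _)
  have hbhh : b ≤ hh := le_inf le_sup_left le_sup_left
  have hzhh : z ≤ hh := hzb.trans hbhh
  have hhu : hh ≤ u := inf_le_left.trans (sup_le hbu hctu)
  have hhL : hh ≤ L := hhu.trans huL
  have hmod : hh = b ⊔ (a ⊓ hh) := by
    have h1 : (b ⊔ a) ⊓ hh = b ⊔ (a ⊓ hh) := sup_inf_assoc_of_le a hbhh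
    have h2 : (b ⊔ a) ⊓ hh = hh := by
      rw [sup_comm b a, hab_s]; exact inf_eq_right.mpr hhu
    rw [← h1, h2]
  have hXY : X ⊓ Y = a ⊓ hh := by
    refine le_antisymm ?_ ?_
    · exact le_inf (inf_le_left.trans inf_le_left)
        (le_inf (inf_le_left.trans inf_le_right) (inf_le_right.trans inf_le_right))
    · exact le_inf (le_inf inf_le_left (inf_le_right.trans inf_le_left))
        (le_inf inf_le_left (inf_le_right.trans inf_le_right))
  -- joins with u
  have habct : a ⊔ (b ⊔ ct) = u := by
    refine le_antisymm (sup_le hau (sup_le hbu hctu)) ?_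
    rw [← hab_s]; exact sup_le le_sup_left (le_sup_left.trans le_sup_right)
  have habdt : a ⊔ (b ⊔ dt) = u := by
    refine le_antisymm (sup_le hau (sup_le hbu hdtu)) ?_
    rw [← hab_s]; exact sup_le le_sup_left (le_sup_left.trans le_sup_right)
  have habs' : a ⊔ (b ⊔ s') = u := by
    refine le_antisymm (sup_le hau (sup_le hbu hs'u)) ?_
    rw [← hab_s]; exact sup_le le_sup_left (le_sup_left.trans le_sup_right)
  have hjoin5 : (b ⊔ ct) ⊔ (b ⊔ dt) = b ⊔ s' := by
    refine le_antisymm ?_ ?_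
    · exact sup_le (sup_le le_sup_left (le_sup_left.trans le_sup_right))
        (sup_le le_sup_left (le_sup_right.trans le_sup_right))
    · exact sup_le (le_sup_left.trans le_sup_left)
        (sup_le (le_sup_right.trans le_sup_left) (le_sup_right.trans le_sup_right))
  have hbahh : b ⊓ (a ⊓ hh) = z := by
    refine le_antisymm ?_ (le_inf hzb (le_inf hza hzhh))
    calc b ⊓ (a ⊓ hh) ≤ b ⊓ a := inf_le_inf_left b inf_le_left
    _ = z := by rw [inf_comm, hab_i]
  -- dimension bookkeeping
  have q1 : δ u + δ z = δ a + δ b := by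
    have := hd.val haL hbL; rwa [hab_s, hab_i] at this
  have f1 : δ s' + δ z = δ ct + δ dt := by
    have := hd.val hctL hdtL; rwa [hctdt] at this
  have f2 : δ (b ⊔ ct) + δ (b ⊓ ct) = δ b + δ ct := hd.val hbL hctL
  have f3 : δ (b ⊔ dt) + δ (b ⊓ dt) = δ b + δ dt := hd.val hbL hdtL
  have f4 : δ (b ⊔ s') + δ (b ⊓ s') = δ b + δ s' := hd.val hbL (hs'u.trans huL)
  have f5 : δ (b ⊔ s') + δ hh = δ (b ⊔ ct) + δ (b ⊔ dt) := by
    have := hd.val (sup_le hbL hctL) (sup_le hbL hdtL)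
    rwa [hjoin5] at this
  have f6 : δ hh + δ z = δ b + δ (a ⊓ hh) := by
    have := hd.val hbL (le_trans (inf_le_right.trans hhu : a ⊓ hh ≤ u) huL)
    rwa [← hmod, hbahh] at this
  have f7 : δ u + δ X = δ a + δ (b ⊔ ct) := by
    have := hd.val haL (sup_le hbL hctL)
    rwa [habct] at this
  have f8 : δ u + δ Y = δ a + δ (b ⊔ dt) := by
    have := hd.val haL (sup_le hbL hdtL)
    rwa [habdt] at this
  have f9 : δ (X ⊔ Y) + δ (a ⊓ hh) = δ X + δ Y := by
    have := hd.val (le_trans (inf_le_left : X ≤ a) haL) (le_trans (inf_le_left : Y ≤ a) haL)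
    rwa [hXY] at this
  have g1 : δ u + δ (a ⊓ (b ⊔ s')) = δ a + δ (b ⊔ s') := by
    have := hd.val haL (sup_le hbL (hs'u.trans huL))
    rwa [habs'] at this
  -- also need: δ (b⊓ct), δ(b⊓dt), δ(b⊓s') relations? all cancel in omega
  have hdim : δ (a ⊓ (b ⊔ s')) ≤ δ (X ⊔ Y) := by omega
  have heq2 : X ⊔ Y = a ⊓ (b ⊔ s') :=
    hd.eq_of hRHSle (le_trans inf_le_left haL) hdim
  rw [← heq2] at htLHS
  exact htLHS

/-- Lattice Fitting lemma: in the fully reduced two–decomposition situation,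
if the "kernel" `a ⊓ e` is nontrivial then the round-trip projection through
`c` is nilpotent. -/
lemma fitting_nilpotent (hd : DimFn L δ) (huL : u ≤ L)
    (hza : z ≤ a) (hzb : z ≤ b) (hzc : z ≤ c) (hze : z ≤ e)
    (hab_i : a ⊓ b = z) (hab_s : a ⊔ b = u)
    (hce_i : c ⊓ e = z) (hce_s : c ⊔ e = u)
    (hac : a ⊔ c = u) (hae : a ⊔ e = u)
    (hbc : b ⊓ c = z) (hbe : b ⊓ e = z)
    (hind : RIndec z a) (hy : a ⊓ e ≠ z) :
    ∃ m, (fun t => a ⊓ (b ⊔ (c ⊓ (e ⊔ t))))^[m] a = z := by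
  have hau : a ≤ u := hab_s ▸ le_sup_left
  have hbu : b ≤ u := hab_s ▸ le_sup_right
  have hcu : c ≤ u := hce_s ▸ le_sup_left
  have heu : e ≤ u := hce_s ▸ le_sup_right
  have haL : a ≤ L := hau.trans huL
  have hbL : b ≤ L := hbu.trans huL
  have hcL : c ≤ L := hcu.trans huL
  have heL : e ≤ L := heu.trans huL
  have hzL : z ≤ L := hza.trans haL
  set y := a ⊓ e with hydef
  set p := a ⊓ (b ⊔ c) with hpdef
  have hzy : z ≤ y := le_inf hza hze
  have hya : y ≤ a := inf_le_left
  have hye : y ≤ e := inf_le_right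
  have hyL : y ≤ L := hya.trans haL
  have hzp : z ≤ p := le_inf hza (hzb.trans le_sup_left)
  have hpa : p ≤ a := inf_le_left
  have hpL : p ≤ L := hpa.trans haL
  set φ : M → M := fun t => a ⊓ (b ⊔ (c ⊓ (e ⊔ t))) with hφdef
  set ψ : M → M := fun w => a ⊓ (e ⊔ (c ⊓ (b ⊔ w))) with hψdef
  have hφmono : Monotone φ := by
    intro s t hst
    exact inf_le_inf_left a (sup_le_sup_left (inf_le_inf_left c (sup_le_sup_left hst e)) b)
  have hψmono : Monotone ψ := by
    intro s t hst
    exact inf_le_inf_left a (sup_le_sup_left (inf_le_inf_left c (sup_le_sup_left hst b)) e)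
  have hφ_z : ∀ t, z ≤ φ t := fun t => le_inf hza (hzb.trans le_sup_left)
  have hφ_p : ∀ t, φ t ≤ p := fun t =>
    inf_le_inf_left a (sup_le_sup_left inf_le_left b)
  have hφ_a : ∀ t, φ t ≤ a := fun t => inf_le_left
  have hψ_y : ∀ w, y ≤ ψ w := fun w => le_inf inf_le_left (hye.trans le_sup_left)
  have hψ_a : ∀ w, ψ w ≤ a := fun w => inf_le_left
  -- φ is constant on y-cosets
  have hφy : ∀ t, φ (t ⊔ y) = φ t := by
    intro t
    have h1 : e ⊔ (t ⊔ y) = e ⊔ t := by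
      rw [sup_comm t y, ← sup_assoc, sup_eq_left.mpr hye]
    simp only [hφdef, h1]
  -- Φ1 : ψ ∘ φ = id on [y,a]
  have hΦ1 : ∀ t, y ≤ t → t ≤ a → ψ (φ t) = t := by
    intro t hyt hta
    set v := c ⊓ (e ⊔ t) with hvdef
    have hzv : z ≤ v := le_inf hzc (hze.trans le_sup_left)
    have hvc : v ≤ c := inf_le_left
    have s1 : b ⊔ (a ⊓ (b ⊔ v)) = b ⊔ v := by
      have h1 : (b ⊔ a) ⊓ (b ⊔ v) = b ⊔ (a ⊓ (b ⊔ v)) :=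
        sup_inf_assoc_of_le a (le_sup_left : b ≤ b ⊔ v)
      rw [← h1, sup_comm b a, hab_s]
      exact inf_eq_right.mpr (sup_le hbu (hvc.trans hcu))
    have s2 : c ⊓ (b ⊔ v) = v := by
      have h1 : (v ⊔ b) ⊓ c = v ⊔ (b ⊓ c) := sup_inf_assoc_of_le b hvc
      rw [inf_comm, sup_comm b v, h1, hbc, sup_eq_left.mpr hzv]
    have s3 : e ⊔ v = e ⊔ t := by
      have h1 : (e ⊔ c) ⊓ (e ⊔ t) = e ⊔ (c ⊓ (e ⊔ t)) :=
        sup_inf_assoc_of_le c (le_sup_left : e ≤ e ⊔ t)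
      rw [hvdef, ← h1, sup_comm e c, hce_s]
      exact inf_eq_right.mpr (sup_le heu (hta.trans hau))
    have s4 : a ⊓ (e ⊔ t) = t := by
      have h1 : (t ⊔ e) ⊓ a = t ⊔ (e ⊓ a) := sup_inf_assoc_of_le e hta
      rw [inf_comm, sup_comm e t, h1, inf_comm e a, ← hydef, sup_eq_left.mpr hyt]
    show a ⊓ (e ⊔ (c ⊓ (b ⊔ (a ⊓ (b ⊔ v))))) = t
    rw [s1, s2, s3, s4]
  -- Φ2 : φ ∘ ψ = id on [z,p]
  have hΦ2 : ∀ w, z ≤ w → w ≤ p → φ (ψ w) = w := by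
    intro w hzw hwp
    set v' := c ⊓ (b ⊔ w) with hv'def
    have hzv' : z ≤ v' := le_inf hzc (hzb.trans le_sup_left)
    have hv'c : v' ≤ c := inf_le_left
    have hwa : w ≤ a := hwp.trans hpa
    have r1 : e ⊔ (a ⊓ (e ⊔ v')) = e ⊔ v' := by
      have h1 : (e ⊔ a) ⊓ (e ⊔ v') = e ⊔ (a ⊓ (e ⊔ v')) :=
        sup_inf_assoc_of_le a (le_sup_left : e ≤ e ⊔ v')
      rw [← h1, sup_comm e a, hae]
      exact inf_eq_right.mpr (sup_le heu (hv'c.trans hcu))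
    have r2 : c ⊓ (e ⊔ v') = v' := by
      have h1 : (v' ⊔ e) ⊓ c = v' ⊔ (e ⊓ c) := sup_inf_assoc_of_le e hv'c
      rw [inf_comm, sup_comm e v', h1, inf_comm e c, hce_i, sup_eq_left.mpr hzv']
    have r3 : b ⊔ v' = b ⊔ w := by
      have h1 : (b ⊔ c) ⊓ (b ⊔ w) = b ⊔ (c ⊓ (b ⊔ w)) :=
        sup_inf_assoc_of_le c (le_sup_left : b ≤ b ⊔ w)
      rw [hv'def, ← h1]
      refine inf_eq_right.mpr (sup_le le_sup_left ?_)
      exact (hwp.trans inf_le_right)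
    have r4 : a ⊓ (b ⊔ w) = w := by
      have h1 : (w ⊔ b) ⊓ a = w ⊔ (b ⊓ a) := sup_inf_assoc_of_le b hwa
      rw [inf_comm, sup_comm b w, h1, inf_comm b a, hab_i, sup_eq_left.mpr hzw]
    show a ⊓ (b ⊔ (c ⊓ (e ⊔ (a ⊓ (e ⊔ v'))))) = w
    rw [r1, r2, r3, r4]
  -- Φ5 : dimension of φ
  have hΦ5 : ∀ t, y ≤ t → t ≤ a → δ (φ t) + δ y = δ t + δ z := by
    intro t hyt hta
    have htL : t ≤ L := hta.trans haL
    set v := c ⊓ (e ⊔ t) with hvdef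
    have hzv : z ≤ v := le_inf hzc (hze.trans le_sup_left)
    have hetL : e ⊔ t ≤ L := (sup_le heu (hta.trans hau)).trans huL
    have hvL : v ≤ L := inf_le_left.trans hcL
    have hbvL : b ⊔ v ≤ L := sup_le hbL hvL
    have hjoin : c ⊔ (e ⊔ t) = u := by
      refine le_antisymm (sup_le hcu (sup_le heu (hta.trans hau))) ?_
      rw [← hce_s]; exact sup_le le_sup_left (le_sup_left.trans le_sup_right)
    have hv_eq : δ u + δ v = δ c + δ (e ⊔ t) := by
      have := hd.val hcL hetL
      rwa [hjoin] at this
    have hinf_et : e ⊓ t = y := by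
      refine le_antisymm (le_inf (inf_le_right.trans hta) inf_le_left) ?_
      · exact le_inf hye hyt
    have het : δ (e ⊔ t) + δ y = δ e + δ t := by
      have := hd.val heL htL
      rwa [hinf_et] at this
    have hvu : v ≤ u := inf_le_left.trans hcu
    have hjoin2 : a ⊔ (b ⊔ v) = u := by
      refine le_antisymm (sup_le hau (sup_le hbu hvu)) ?_
      rw [← hab_s]; exact sup_le le_sup_left (le_sup_left.trans le_sup_right)
    have hφt : δ u + δ (φ t) = δ a + δ (b ⊔ v) := by
      have := hd.val haL hbvL
      rwa [hjoin2] at this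
    have hbv_i : b ⊓ v = z := by
      refine le_antisymm ?_ (le_inf hzb hzv)
      calc b ⊓ v ≤ b ⊓ c := inf_le_inf_left b inf_le_left
      _ = z := hbc
    have hbv : δ (b ⊔ v) + δ z = δ b + δ v := by
      have := hd.val hbL hvL
      rwa [hbv_i] at this
    have q1 : δ u + δ z = δ a + δ b := by
      have := hd.val haL hbL; rwa [hab_s, hab_i] at this
    have q2 : δ u + δ z = δ c + δ e := by
      have := hd.val hcL heL; rwa [hce_s, hce_i] at this
    omega
  -- Φ5' : dimension of ψ
  have hΦ5' : ∀ w, z ≤ w → w ≤ p → δ (ψ w) + δ z = δ w + δ y := by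
    intro w hzw hwp
    have h1 := hΦ5 (ψ w) (hψ_y w) (hψ_a w)
    rw [hΦ2 w hzw hwp] at h1
    omega
  -- the reverse iteration map
  set χ' : M → M := fun w => ψ (w ⊓ p) with hχ'def
  have hχ'mono : Monotone χ' := fun s t hst => hψmono (inf_le_inf_right p hst)
  set I : ℕ → M := fun m => φ^[m] a with hIdef
  set K : ℕ → M := fun m => χ'^[m] y with hKdef
  have hIa : ∀ m, I m ≤ a := by
    intro m
    cases m with
    | zero => exact le_rfl
    | succ m =>
      show φ^[m + 1] a ≤ a
      rw [Function.iterate_succ_apply']; exact hφ_a _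
  have hzI : ∀ m, z ≤ I m := by
    intro m
    cases m with
    | zero => exact hza
    | succ m =>
      show z ≤ φ^[m + 1] a
      rw [Function.iterate_succ_apply']; exact hφ_z _
  have hIp : ∀ m, I (m + 1) ≤ p := by
    intro m
    show φ^[m + 1] a ≤ p
    rw [Function.iterate_succ_apply']; exact hφ_p _
  have hyK : ∀ m, y ≤ K m := by
    intro m
    cases m with
    | zero => exact le_rfl
    | succ m =>
      show y ≤ χ'^[m + 1] y
      rw [Function.iterate_succ_apply']; exact hψ_y _
  have hKa : ∀ m, K m ≤ a := by
    intro m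
    cases m with
    | zero => exact hya
    | succ m =>
      show χ'^[m + 1] y ≤ a
      rw [Function.iterate_succ_apply']; exact hψ_a _
  have hIL : ∀ m, I m ≤ L := fun m => (hIa m).trans haL
  have hKL : ∀ m, K m ≤ L := fun m => (hKa m).trans haL
  have hIdec : ∀ m, I (m + 1) ≤ I m := by
    intro m
    show φ^[m + 1] a ≤ φ^[m] a
    rw [Function.iterate_succ_apply]
    exact hφmono.iterate m (hφ_a a)
  have hKinc : ∀ m, K m ≤ K (m + 1) := by
    intro m
    show χ'^[m] y ≤ χ'^[m + 1] y
    rw [Function.iterate_succ_apply]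
    exact hχ'mono.iterate m (hψ_y _)
  have hχK : ∀ m, φ^[m + 1] (K m) ≤ z := by
    intro m
    induction m with
    | zero =>
      have h1 : φ y = z := by
        have he1 : e ⊔ y = e := sup_eq_left.mpr hye
        have he2 : b ⊔ z = b := sup_eq_left.mpr hzb
        show a ⊓ (b ⊔ (c ⊓ (e ⊔ y))) = z
        rw [he1, hce_i, he2, hab_i]
      show φ^[1] (K 0) ≤ z
      have hK0 : K 0 = y := rfl
      rw [hK0, Function.iterate_one, h1]
    | succ m ih =>
      have h1 : φ (K (m + 1)) ≤ K m := by
        have h2 : K (m + 1) = ψ (K m ⊓ p) := by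
          show χ'^[m + 1] y = _
          rw [Function.iterate_succ_apply']
        have h3 : φ (K (m + 1)) = K m ⊓ p := by
          rw [h2, hΦ2 _ (le_inf (hzy.trans (hyK m)) hzp) inf_le_right]
        rw [h3]; exact inf_le_left
      calc φ^[m + 2] (K (m + 1)) = φ^[m + 1] (φ (K (m + 1))) := by
            rw [← Function.iterate_succ_apply]
      _ ≤ φ^[m + 1] (K m) := (hφmono.iterate (m + 1)) h1
      _ ≤ z := ih
  have hχ'I : ∀ m, a ≤ χ'^[m] (I m) := by
    intro m
    induction m with
    | zero => exact le_rfl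
    | succ m ih =>
      have h1 : I m ≤ χ' (I (m + 1)) := by
        have h2 : I (m + 1) ⊓ p = I (m + 1) := inf_eq_left.mpr (hIp m)
        have h3 : χ' (I (m + 1)) = ψ (φ (I m ⊔ y)) := by
          show ψ (I (m + 1) ⊓ p) = _
          rw [h2, hφy]
          show ψ (φ^[m + 1] a) = _
          rw [Function.iterate_succ_apply']
        rw [h3, hΦ1 _ le_sup_right (sup_le (hIa m) hya)]
        exact le_sup_left
      calc a ≤ χ'^[m] (I m) := ih
      _ ≤ χ'^[m] (χ' (I (m + 1))) := (hχ'mono.iterate m) h1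
      _ = χ'^[m + 1] (I (m + 1)) := by rw [← Function.iterate_succ_apply]
  -- simultaneous stabilization
  have hstab : ∃ n, I (n + 1) = I n ∧ K (n + 1) = K n := by
    have hmonoI : ∀ m, δ (I (m + 1)) ≤ δ (I m) := fun m => hd.mono (hIdec m) (hIL m)
    have hmonoK : ∀ m, δ (K m) ≤ δ (K (m + 1)) := fun m => hd.mono (hKinc m) (hKL _)
    have hKbd : ∀ m, δ (K m) ≤ δ a := fun m => hd.mono (hKa m) haL
    by_contra hno
    push_neg at hno
    have hmeas : ∀ m, δ (I (m + 1)) + (δ a - δ (K (m + 1))) < δ (I m) + (δ a - δ (K m)) := by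
      intro m
      have hno' : I (m + 1) ≠ I m ∨ K (m + 1) ≠ K m := by
        by_contra hc
        push_neg at hc
        exact hno m hc.1 hc.2
      rcases hno' with h | h
      · have hlt : δ (I (m + 1)) < δ (I m) := by
          rcases eq_or_lt_of_le (hIdec m) with he | hl
          · exact absurd he h
          · exact hd.strict hl (hIL m)
        have h2 := hKbd (m + 1)
        have h3 := hmonoK m
        omega
      · have hlt : δ (K m) < δ (K (m + 1)) := by
          rcases eq_or_lt_of_le (hKinc m) with he | hl
          · exact absurd he.symm h
          · exact hd.strict hl (hKL _)
        have h2 := hKbd (m + 1)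
        have h3 := hmonoI m
        omega
    have hbound : ∀ m, δ (I m) + (δ a - δ (K m)) + m ≤ δ (I 0) + (δ a - δ (K 0)) := by
      intro m
      induction m with
      | zero => omega
      | succ m ih =>
        have := hmeas m
        omega
    have := hbound (δ (I 0) + (δ a - δ (K 0)) + 1)
    omega
  obtain ⟨n, hIfix0, hKfix0⟩ := hstab
  set Iv := I n with hIvdef
  set Kv := K n with hKvdef
  have hIfix : φ Iv = Iv := by
    have h1 : I (n + 1) = φ Iv := by
      show φ^[n + 1] a = _
      rw [Function.iterate_succ_apply']
    rw [← h1, hIfix0]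
  have hKfix : ψ (Kv ⊓ p) = Kv := by
    have h1 : K (n + 1) = ψ (Kv ⊓ p) := by
      show χ'^[n + 1] y = _
      rw [Function.iterate_succ_apply']
    rw [← h1, hKfix0]
  have hIva : Iv ≤ a := hIa n
  have hzIv : z ≤ Iv := hzI n
  have hKva : Kv ≤ a := hKa n
  have hyKv : y ≤ Kv := hyK n
  have hzKv : z ≤ Kv := hzy.trans hyKv
  have hIvL : Iv ≤ L := hIva.trans haL
  have hKvL : Kv ≤ L := hKva.trans haL
  have hIvp : Iv ≤ p := by rw [← hIfix]; exact hφ_p _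
  have hpdim : δ p + δ y = δ a + δ z := by
    have h0 := hΦ5 a hya le_rfl
    have hpa' : φ a = p := by
      show a ⊓ (b ⊔ (c ⊓ (e ⊔ a))) = p
      have h1 : e ⊔ a = u := by rw [sup_comm]; exact hae
      have h2 : c ⊓ u = c := inf_eq_left.mpr hcu
      rw [h1, h2]
    rwa [hpa'] at h0
  have hF1 : Iv ⊓ y = z := by
    have h1 := hΦ5 (Iv ⊔ y) le_sup_right (sup_le hIva hya)
    rw [hφy, hIfix] at h1
    have h2 : δ (Iv ⊔ y) + δ (Iv ⊓ y) = δ Iv + δ y := hd.val hIvL hyL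
    refine (hd.eq_of (le_inf hzIv hzy) (le_trans inf_le_left hIvL) ?_).symm
    omega
  have hF2 : Kv ⊔ p = a := by
    have h1 := hΦ5' (Kv ⊓ p) (le_inf hzKv hzp) inf_le_right
    rw [hKfix] at h1
    have h2 : δ (Kv ⊔ p) + δ (Kv ⊓ p) = δ Kv + δ p := hd.val hKvL hpL
    refine hd.eq_of (sup_le hKva hpa) haL ?_
    omega
  have hF3 : Iv ⊓ Kv = z := by
    have hφKv : φ Kv = Kv ⊓ p := by
      conv_lhs => rw [← hKfix]
      exact hΦ2 _ (le_inf hzKv hzp) inf_le_right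
    have hle1 : φ (Iv ⊓ Kv) ≤ Iv ⊓ Kv := by
      refine le_inf ?_ ?_
      · calc φ (Iv ⊓ Kv) ≤ φ Iv := hφmono inf_le_left
        _ = Iv := hIfix
      · calc φ (Iv ⊓ Kv) ≤ φ Kv := hφmono inf_le_right
        _ = Kv ⊓ p := hφKv
        _ ≤ Kv := inf_le_left
    have hIvKvy : Iv ⊓ Kv ⊓ y = z := by
      refine le_antisymm ?_ (le_inf (le_inf hzIv hzKv) hzy)
      calc Iv ⊓ Kv ⊓ y ≤ Iv ⊓ y := inf_le_inf_right y inf_le_left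
      _ = z := hF1
    have hdim1 : δ (φ (Iv ⊓ Kv)) = δ (Iv ⊓ Kv) := by
      have h1 := hΦ5 ((Iv ⊓ Kv) ⊔ y) le_sup_right (sup_le (inf_le_left.trans hIva) hya)
      rw [hφy] at h1
      have h2 : δ ((Iv ⊓ Kv) ⊔ y) + δ (Iv ⊓ Kv ⊓ y) = δ (Iv ⊓ Kv) + δ y :=
        hd.val (le_trans inf_le_left hIvL) hyL
      rw [hIvKvy] at h2
      omega
    have hfix2 : φ (Iv ⊓ Kv) = Iv ⊓ Kv :=
      hd.eq_of hle1 (le_trans inf_le_left hIvL) (by omega)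
    have hiter : ∀ m, φ^[m] (Iv ⊓ Kv) = Iv ⊓ Kv := by
      intro m
      induction m with
      | zero => rfl
      | succ m ih => rw [Function.iterate_succ_apply', ih, hfix2]
    have h3 : Iv ⊓ Kv ≤ z := by
      calc Iv ⊓ Kv = φ^[n + 1] (Iv ⊓ Kv) := (hiter (n + 1)).symm
      _ ≤ φ^[n + 1] Kv := (hφmono.iterate (n + 1)) inf_le_right
      _ ≤ z := hχK n
    exact le_antisymm h3 (le_inf hzIv hzKv)
  have hF4 : Iv ⊔ Kv = a := by
    have hψIv : ψ Iv = Iv ⊔ y := by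
      conv_lhs => rw [← hIfix, ← hφy Iv]
      exact hΦ1 _ le_sup_right (sup_le hIva hya)
    have hJfix_ge : Iv ⊔ Kv ≤ ψ ((Iv ⊔ Kv) ⊓ p) := by
      refine sup_le ?_ ?_
      · calc Iv ≤ Iv ⊔ y := le_sup_left
        _ = ψ Iv := hψIv.symm
        _ = ψ (Iv ⊓ p) := by rw [inf_eq_left.mpr hIvp]
        _ ≤ ψ ((Iv ⊔ Kv) ⊓ p) := hψmono (inf_le_inf_right p le_sup_left)
      · calc Kv = ψ (Kv ⊓ p) := hKfix.symm
        _ ≤ ψ ((Iv ⊔ Kv) ⊓ p) := hψmono (inf_le_inf_right p le_sup_right)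
    have hsupp : (Iv ⊔ Kv) ⊔ p = a := by
      refine le_antisymm (sup_le (sup_le hIva hKva) hpa) ?_
      rw [← hF2]
      exact sup_le (le_sup_right.trans le_sup_left) le_sup_right
    have hdim1 : δ (ψ ((Iv ⊔ Kv) ⊓ p)) = δ (Iv ⊔ Kv) := by
      have h1 := hΦ5' ((Iv ⊔ Kv) ⊓ p) (le_inf (hzIv.trans le_sup_left) hzp) inf_le_right
      have h2 : δ ((Iv ⊔ Kv) ⊔ p) + δ ((Iv ⊔ Kv) ⊓ p) = δ (Iv ⊔ Kv) + δ p :=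
        hd.val (le_trans (sup_le hIva hKva) haL) hpL
      rw [hsupp] at h2
      omega
    have hfix : ψ ((Iv ⊔ Kv) ⊓ p) = Iv ⊔ Kv :=
      (hd.eq_of hJfix_ge ((hψ_a _).trans haL) (by omega)).symm
    have hχ'fix : χ' (Iv ⊔ Kv) = Iv ⊔ Kv := hfix
    have hiter : ∀ m, χ'^[m] (Iv ⊔ Kv) = Iv ⊔ Kv := by
      intro m
      induction m with
      | zero => rfl
      | succ m ih => rw [Function.iterate_succ_apply', ih, hχ'fix]
    have h3 : a ≤ Iv ⊔ Kv := by
      calc a ≤ χ'^[n] (I n) := hχ'I n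
      _ ≤ χ'^[n] (Iv ⊔ Kv) := (hχ'mono.iterate n) le_sup_left
      _ = Iv ⊔ Kv := hiter n
    exact le_antisymm (sup_le hIva hKva) h3
  rcases hind.2 Iv Kv hzIv hzKv hF3 hF4 with h | h
  · exact ⟨n, h⟩
  · exfalso
    apply hy
    refine le_antisymm ?_ hzy
    calc a ⊓ e = y := rfl
    _ ≤ Kv := hyKv
    _ = z := h

/-- The impossible fully-reduced configuration ("case 7"). -/
lemma case7_false (hd : DimFn L δ) (huL : u ≤ L)
    (hza : z ≤ a) (hzb : z ≤ b) (hzc : z ≤ c) (hze : z ≤ e)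
    (hab_i : a ⊓ b = z) (hab_s : a ⊔ b = u)
    (hce_i : c ⊓ e = z) (hce_s : c ⊔ e = u)
    (hac : a ⊔ c = u) (hae : a ⊔ e = u)
    (hbc : b ⊓ c = z) (hbe : b ⊓ e = z)
    (hind : RIndec z a) (hx : a ⊓ c ≠ z) (hy : a ⊓ e ≠ z) : False := by
  classical
  obtain ⟨m1, hm1⟩ := fitting_nilpotent hd huL hza hzb hzc hze hab_i hab_s hce_i hce_s
    hac hae hbc hbe hind hy
  obtain ⟨m2, hm2⟩ := fitting_nilpotent hd huL hza hzb hze hzc hab_i hab_s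
    (by rw [inf_comm]; exact hce_i) (by rw [sup_comm]; exact hce_s) hae hac hbe hbc hind hx
  set χ : M → M := fun t => a ⊓ (b ⊔ (c ⊓ (e ⊔ t))) with hχdef
  set ξ : M → M := fun t => a ⊓ (b ⊔ (e ⊓ (c ⊔ t))) with hξdef
  have hχmono : Monotone χ := fun s t hst =>
    inf_le_inf_left a (sup_le_sup_left (inf_le_inf_left c (sup_le_sup_left hst e)) b)
  have hξmono : Monotone ξ := fun s t hst =>
    inf_le_inf_left a (sup_le_sup_left (inf_le_inf_left e (sup_le_sup_left hst c)) b)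
  have hχ_z : ∀ t, z ≤ χ t := fun t => le_inf hza (hzb.trans le_sup_left)
  have hξ_z : ∀ t, z ≤ ξ t := fun t => le_inf hza (hzb.trans le_sup_left)
  have hχ_a : ∀ t, χ t ≤ a := fun t => inf_le_left
  have hiterb : ∀ m, z ≤ χ^[m] a ∧ χ^[m] a ≤ a := by
    intro m
    cases m with
    | zero => exact ⟨hza, le_rfl⟩
    | succ m =>
      rw [Function.iterate_succ_apply']
      exact ⟨hχ_z _, hχ_a _⟩
  have hex : ∃ m, χ^[m] a = z := ⟨m1, hm1⟩
  set m0 := Nat.find hex with hm0def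
  have hm0 : χ^[m0] a = z := Nat.find_spec hex
  have hm0pos : m0 ≠ 0 := by
    intro h0
    rw [h0] at hm0
    exact absurd hm0.symm (ne_of_lt hind.1)
  set w := χ^[m0 - 1] a with hwdef
  have hw_ne : w ≠ z := Nat.find_min hex (by omega)
  have hχw : χ w = z := by
    have h1 : m0 - 1 + 1 = m0 := by omega
    have h2 : χ^[m0 - 1 + 1] a = χ (χ^[m0 - 1] a) := Function.iterate_succ_apply' χ (m0 - 1) a
    rw [h1] at h2
    rw [hwdef, ← h2, hm0]
  obtain ⟨hzw, hwa⟩ := hiterb (m0 - 1)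
  have hP := P_le hd huL hza hzb hzc hze hab_i hab_s hce_i hce_s hzw hwa
  have hwξ : w ≤ ξ w := by
    have h1 : a ⊓ (b ⊔ (c ⊓ (e ⊔ w))) = z := hχw
    rw [h1, sup_comm, sup_eq_left.mpr (hξ_z w)] at hP
    exact hP
  have hinc : ∀ m, w ≤ ξ^[m] w := by
    intro m
    induction m with
    | zero => exact le_rfl
    | succ m ih =>
      calc w ≤ ξ^[m] w := ih
      _ ≤ ξ^[m] (ξ w) := (hξmono.iterate m) hwξ
      _ = ξ^[m + 1] w := (Function.iterate_succ_apply ξ m w).symm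
  have hfin : w ≤ z := by
    calc w ≤ ξ^[m2] w := hinc m2
    _ ≤ ξ^[m2] a := (hξmono.iterate m2) hwa
    _ = z := hm2
  exact hw_ne (le_antisymm hfin hzw)

end Config


/-- The two-decomposition replacement lemma ("R2''"). -/
lemma R2 {M : Type*} [Lattice M] [IsModularLattice M] [OrderBot M] {L : M} {δ : M → ℕ}
    (hd : DimFn L δ) :
    ∀ N : ℕ, ∀ z u a b c e : M, u ≤ L →
      z ≤ a → z ≤ b → z ≤ c → z ≤ e →
      a ⊓ b = z → a ⊔ b = u → c ⊓ e = z → c ⊔ e = u →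
      δ u ≤ δ z + N → RIndec z a →
      (∃ c₀, z ≤ c₀ ∧ c₀ ≤ c ∧ c₀ ⊔ b = u ∧ c₀ ⊓ b = z) ∨
      (∃ e₀, z ≤ e₀ ∧ e₀ ≤ e ∧ e₀ ⊔ b = u ∧ e₀ ⊓ b = z) := by
  intro N
  induction N with
  | zero =>
    intro z u a b c e huL hza hzb hzc hze hab_i hab_s hce_i hce_s hN hind
    exfalso
    have hau : a ≤ u := hab_s ▸ le_sup_left
    have hzu : z ≤ u := hza.trans hau
    have : z = u := hd.eq_of hzu huL (by omega)
    have haz : a ≤ z := this ▸ hau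
    exact absurd (le_antisymm haz hza).symm (ne_of_lt hind.1)
  | succ N ih =>
    intro z u a b c e huL hza hzb hzc hze hab_i hab_s hce_i hce_s hN hind
    have hau : a ≤ u := hab_s ▸ le_sup_left
    have hbu : b ≤ u := hab_s ▸ le_sup_right
    have hcu : c ≤ u := hce_s ▸ le_sup_left
    have heu : e ≤ u := hce_s ▸ le_sup_right
    have haL : a ≤ L := hau.trans huL
    have hbL : b ≤ L := hbu.trans huL
    have hcL : c ≤ L := hcu.trans huL
    have heL : e ≤ L := heu.trans huL
    have hzL : z ≤ L := hza.trans haL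
    -- case 1 : a ⊔ c < u
    by_cases hacu : a ⊔ c = u
    case neg =>
      set v := a ⊔ c with hvdef
      have hvu : v ≤ u := sup_le hau hcu
      have hvL : v ≤ L := hvu.trans huL
      have hvlt : v < u := lt_of_le_of_ne hvu hacu
      have havd : a ⊔ (b ⊓ v) = v := by
        have h1 : (a ⊔ b) ⊓ v = a ⊔ (b ⊓ v) := sup_inf_assoc_of_le b (le_sup_left : a ≤ v)
        rw [← h1, hab_s, inf_eq_right.mpr hvu]
      have hcvd : c ⊔ (e ⊓ v) = v := by
        have h1 : (c ⊔ e) ⊓ v = c ⊔ (e ⊓ v) := sup_inf_assoc_of_le e (le_sup_right : c ≤ v)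
        rw [← h1, hce_s, inf_eq_right.mpr hvu]
      have h1 := ih z v a (b ⊓ v) c (e ⊓ v) hvL hza
        (le_inf hzb (hza.trans le_sup_left)) hzc (le_inf hze (hzc.trans le_sup_right))
        (le_antisymm (le_trans (inf_le_inf_left a inf_le_left) hab_i.le)
          (le_inf hza (le_inf hzb (hza.trans le_sup_left))))
        havd
        (le_antisymm (le_trans (inf_le_inf_left c inf_le_left) hce_i.le)
          (le_inf hzc (le_inf hze (hzc.trans le_sup_right))))
        hcvd
        (by have := hd.strict hvlt huL; omega) hind
      rcases h1 with ⟨c₀, hzc₀, hc₀c, hc₀s, hc₀i⟩ | ⟨e₀, hze₀, he₀e, he₀s, he₀i⟩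
      · refine Or.inl ⟨c₀, hzc₀, hc₀c, ?_, ?_⟩
        · refine le_antisymm (sup_le ((hc₀c.trans hcu)) hbu) ?_
          rw [← hab_s]
          refine sup_le ?_ le_sup_right
          calc a ≤ v := le_sup_left
          _ = c₀ ⊔ (b ⊓ v) := hc₀s.symm
          _ ≤ c₀ ⊔ b := sup_le_sup_left inf_le_left c₀
        · refine le_antisymm ?_ (le_inf hzc₀ hzb)
          rw [← hc₀i]
          exact le_inf inf_le_left (le_inf inf_le_right
            (le_trans inf_le_left (hc₀c.trans le_sup_right)))
      · refine Or.inr ⟨e₀, hze₀, he₀e.trans inf_le_left, ?_, ?_⟩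
        · refine le_antisymm (sup_le ((he₀e.trans (inf_le_left.trans heu))) hbu) ?_
          rw [← hab_s]
          refine sup_le ?_ le_sup_right
          calc a ≤ v := le_sup_left
          _ = e₀ ⊔ (b ⊓ v) := he₀s.symm
          _ ≤ e₀ ⊔ b := sup_le_sup_left inf_le_left e₀
        · refine le_antisymm ?_ (le_inf hze₀ hzb)
          rw [← he₀i]
          exact le_inf inf_le_left (le_inf inf_le_right
            (le_trans inf_le_left (he₀e.trans inf_le_right)))
    case pos =>
    -- case 2 : a ⊔ e < u
    by_cases haeu : a ⊔ e = u
    case neg =>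
      set v := a ⊔ e with hvdef
      have hvu : v ≤ u := sup_le hau heu
      have hvL : v ≤ L := hvu.trans huL
      have hvlt : v < u := lt_of_le_of_ne hvu haeu
      have havd : a ⊔ (b ⊓ v) = v := by
        have h1 : (a ⊔ b) ⊓ v = a ⊔ (b ⊓ v) := sup_inf_assoc_of_le b (le_sup_left : a ≤ v)
        rw [← h1, hab_s, inf_eq_right.mpr hvu]
      have hevd : (c ⊓ v) ⊔ e = v := by
        have h1 : (e ⊔ c) ⊓ v = e ⊔ (c ⊓ v) := sup_inf_assoc_of_le c (le_sup_right : e ≤ v)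
        rw [sup_comm (c ⊓ v) e, ← h1, sup_comm e c, hce_s, inf_eq_right.mpr hvu]
      have h1 := ih z v a (b ⊓ v) (c ⊓ v) e hvL hza
        (le_inf hzb (hza.trans le_sup_left)) (le_inf hzc (hze.trans le_sup_right)) hze
        (le_antisymm (le_trans (inf_le_inf_left a inf_le_left) hab_i.le)
          (le_inf hza (le_inf hzb (hza.trans le_sup_left))))
        havd
        (le_antisymm (le_trans (inf_le_inf_right e inf_le_left) hce_i.le)
          (le_inf (le_inf hzc (hze.trans le_sup_right)) hze))
        hevd
        (by have := hd.strict hvlt huL; omega) hind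
      rcases h1 with ⟨c₀, hzc₀, hc₀c, hc₀s, hc₀i⟩ | ⟨e₀, hze₀, he₀e, he₀s, he₀i⟩
      · refine Or.inl ⟨c₀, hzc₀, hc₀c.trans inf_le_left, ?_, ?_⟩
        · refine le_antisymm (sup_le ((hc₀c.trans (inf_le_left.trans hcu))) hbu) ?_
          rw [← hab_s]
          refine sup_le ?_ le_sup_right
          calc a ≤ v := le_sup_left
          _ = c₀ ⊔ (b ⊓ v) := hc₀s.symm
          _ ≤ c₀ ⊔ b := sup_le_sup_left inf_le_left c₀
        · refine le_antisymm ?_ (le_inf hzc₀ hzb)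
          rw [← hc₀i]
          exact le_inf inf_le_left (le_inf inf_le_right
            (le_trans inf_le_left (hc₀c.trans inf_le_right)))
      · refine Or.inr ⟨e₀, hze₀, he₀e, ?_, ?_⟩
        · refine le_antisymm (sup_le ((he₀e.trans heu)) hbu) ?_
          rw [← hab_s]
          refine sup_le ?_ le_sup_right
          calc a ≤ v := le_sup_left
          _ = e₀ ⊔ (b ⊓ v) := he₀s.symm
          _ ≤ e₀ ⊔ b := sup_le_sup_left inf_le_left e₀
        · refine le_antisymm ?_ (le_inf hze₀ hzb)
          rw [← he₀i]
          exact le_inf inf_le_left (le_inf inf_le_right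
            (le_trans inf_le_left (he₀e.trans le_sup_right)))
    case pos =>
    -- case 3 : b ⊓ c > z (quotient by f = b ⊓ c)
    by_cases hbcz : b ⊓ c = z
    case neg =>
      set f := b ⊓ c with hfdef
      have hzf : z ≤ f := le_inf hzb hzc
      have hflt : z < f := lt_of_le_of_ne hzf (Ne.symm hbcz)
      have hfb : f ≤ b := inf_le_left
      have hfc : f ≤ c := inf_le_right
      have hfL : f ≤ L := hfb.trans hbL
      have hfa_i : f ⊓ a = z := by
        refine le_antisymm ?_ (le_inf hzf hza)
        calc f ⊓ a ≤ b ⊓ a := inf_le_inf_right a inf_le_left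
        _ = z := by rw [inf_comm]; exact hab_i
      have hab_i' : (a ⊔ f) ⊓ b = f := by
        have h1 : (f ⊔ a) ⊓ b = f ⊔ (a ⊓ b) := sup_inf_assoc_of_le a hfb
        rw [sup_comm a f, h1, hab_i, sup_eq_left.mpr hzf]
      have hab_s' : (a ⊔ f) ⊔ b = u := by
        rw [sup_assoc, sup_eq_right.mpr hfb, hab_s]
      have hce_i' : c ⊓ (e ⊔ f) = f := by
        have h1 : (f ⊔ e) ⊓ c = f ⊔ (e ⊓ c) := sup_inf_assoc_of_le e hfc
        rw [inf_comm, sup_comm e f, h1, inf_comm e c, hce_i, sup_eq_left.mpr hzf]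
      have hce_s' : c ⊔ (e ⊔ f) = u := by
        rw [← sup_assoc, hce_s, sup_eq_left.mpr (hfb.trans hbu)]
      have hind' : RIndec f (a ⊔ f) := by
        refine RIndec.transfer (· ⊔ f) (· ⊓ a)
          (fun s t h => sup_le_sup_right h f)
          (fun s t h => inf_le_inf_right a h)
          (sup_eq_right.mpr hzf) rfl ?_ ?_ ?_ ?_ hind
        · intro t hzt hta
          show (t ⊔ f) ⊓ a = t
          have h1 : (t ⊔ f) ⊓ a = t ⊔ (f ⊓ a) := sup_inf_assoc_of_le f hta
          rw [h1, hfa_i, sup_eq_left.mpr hzt]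
        · intro w hfw hwa
          show (w ⊓ a) ⊔ f = w
          have h1 : (w ⊓ a) ⊔ f = w ⊓ (a ⊔ f) := inf_sup_assoc_of_le a hfw
          rw [h1, inf_eq_left.mpr hwa]
        · intro t hzt hta
          exact ⟨le_sup_right, sup_le_sup_right hta f⟩
        · intro w hfw hwa
          exact ⟨le_inf (hzf.trans hfw) hza, inf_le_right⟩
      have h1 := ih f u (a ⊔ f) b c (e ⊔ f) huL le_sup_right hfb hfc le_sup_right
        hab_i' hab_s' hce_i' hce_s'
        (by have := hd.strict hflt hfL; omega) hind'
      rcases h1 with ⟨c₀, hfc₀, hc₀c, hc₀s, hc₀i⟩ | ⟨e₀, hfe₀, he₀e, he₀s, he₀i⟩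
      · exfalso
        have hv1 : δ u + δ f = δ c₀ + δ b := by
          have := hd.val (hc₀c.trans hcL : c₀ ≤ L) hbL
          rwa [hc₀s, hc₀i] at this
        have hv2 : δ u + δ (a ⊓ e) = δ a + δ e := by
          have := hd.val haL heL
          rwa [haeu] at this
        have hv3 : δ u + δ z = δ c + δ e := by
          have := hd.val hcL heL; rwa [hce_s, hce_i] at this
        have hv4 : δ u + δ z = δ a + δ b := by
          have := hd.val haL hbL; rwa [hab_s, hab_i] at this
        have hm1 : δ c₀ ≤ δ c := hd.mono hc₀c hcL
        have hm2 : δ z ≤ δ (a ⊓ e) := hd.mono (le_inf hza hze) (inf_le_left.trans haL)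
        have hm3 : δ z < δ f := hd.strict hflt hfL
        omega
      · set e₀' := e₀ ⊓ e with he₀'def
        have he₀L : e₀ ≤ L := he₀e.trans (sup_le heL hfL)
        have he₀d : e₀' ⊔ f = e₀ := by
          have h1 : (e₀ ⊓ e) ⊔ f = e₀ ⊓ (e ⊔ f) := inf_sup_assoc_of_le e hfe₀
          rw [he₀'def, h1, inf_eq_left.mpr he₀e]
        have he₀'z : z ≤ e₀' := le_inf (hzf.trans hfe₀) hze
        have he₀'e : e₀' ≤ e := inf_le_right
        have he₀'f_i : e₀' ⊓ f = z := by
          refine le_antisymm ?_ (le_inf he₀'z hzf)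
          calc e₀' ⊓ f ≤ e ⊓ c := inf_le_inf inf_le_right inf_le_right
          _ = z := by rw [inf_comm]; exact hce_i
        have he₀'s : e₀' ⊔ b = u := by
          have h2 : f ⊔ b = b := sup_eq_right.mpr hfb
          calc e₀' ⊔ b = e₀' ⊔ (f ⊔ b) := by rw [h2]
          _ = (e₀' ⊔ f) ⊔ b := by rw [sup_assoc]
          _ = e₀ ⊔ b := by rw [he₀d]
          _ = u := he₀s
        have hv1 : δ e₀ + δ z = δ e₀' + δ f := by
          have := hd.val (he₀'e.trans heL) hfL
          rwa [he₀d, he₀'f_i] at this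
        have hv2 : δ u + δ f = δ e₀ + δ b := by
          have := hd.val he₀L hbL
          rwa [he₀s, he₀i] at this
        have hv3 : δ u + δ (e₀' ⊓ b) = δ e₀' + δ b := by
          have := hd.val (he₀'e.trans heL) hbL
          rwa [he₀'s] at this
        have he₀'b : e₀' ⊓ b = z := by
          have := hd.eq_of (le_inf he₀'z hzb) (inf_le_left.trans (he₀'e.trans heL))
            (by omega : δ (e₀' ⊓ b) ≤ δ z)
          exact this.symm
        exact Or.inr ⟨e₀', he₀'z, he₀'e, he₀'s, he₀'b⟩
    case pos =>
    -- case 4 : b ⊓ e > z (quotient by g = b ⊓ e)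
    by_cases hbez : b ⊓ e = z
    case neg =>
      set g := b ⊓ e with hgdef
      have hzg : z ≤ g := le_inf hzb hze
      have hglt : z < g := lt_of_le_of_ne hzg (Ne.symm hbez)
      have hgb : g ≤ b := inf_le_left
      have hge : g ≤ e := inf_le_right
      have hgL : g ≤ L := hgb.trans hbL
      have hga_i : g ⊓ a = z := by
        refine le_antisymm ?_ (le_inf hzg hza)
        calc g ⊓ a ≤ b ⊓ a := inf_le_inf_right a inf_le_left
        _ = z := by rw [inf_comm]; exact hab_i
      have hab_i' : (a ⊔ g) ⊓ b = g := by
        have h1 : (g ⊔ a) ⊓ b = g ⊔ (a ⊓ b) := sup_inf_assoc_of_le a hgb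
        rw [sup_comm a g, h1, hab_i, sup_eq_left.mpr hzg]
      have hab_s' : (a ⊔ g) ⊔ b = u := by
        rw [sup_assoc, sup_eq_right.mpr hgb, hab_s]
      have hce_i' : e ⊓ (c ⊔ g) = g := by
        have h1 : (g ⊔ c) ⊓ e = g ⊔ (c ⊓ e) := sup_inf_assoc_of_le c hge
        rw [inf_comm, sup_comm c g, h1, hce_i, sup_eq_left.mpr hzg]
      have hce_s' : e ⊔ (c ⊔ g) = u := by
        rw [← sup_assoc, sup_comm e c, hce_s, sup_eq_left.mpr (hgb.trans hbu)]
      have hind' : RIndec g (a ⊔ g) := by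
        refine RIndec.transfer (· ⊔ g) (· ⊓ a)
          (fun s t h => sup_le_sup_right h g)
          (fun s t h => inf_le_inf_right a h)
          (sup_eq_right.mpr hzg) rfl ?_ ?_ ?_ ?_ hind
        · intro t hzt hta
          show (t ⊔ g) ⊓ a = t
          have h1 : (t ⊔ g) ⊓ a = t ⊔ (g ⊓ a) := sup_inf_assoc_of_le g hta
          rw [h1, hga_i, sup_eq_left.mpr hzt]
        · intro w hgw hwa
          show (w ⊓ a) ⊔ g = w
          have h1 : (w ⊓ a) ⊔ g = w ⊓ (a ⊔ g) := inf_sup_assoc_of_le a hgw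
          rw [h1, inf_eq_left.mpr hwa]
        · intro t hzt hta
          exact ⟨le_sup_right, sup_le_sup_right hta g⟩
        · intro w hgw hwa
          exact ⟨le_inf (hzg.trans hgw) hza, inf_le_right⟩
      have h1 := ih g u (a ⊔ g) b e (c ⊔ g) huL le_sup_right hgb hge le_sup_right
        hab_i' hab_s' hce_i' hce_s'
        (by have := hd.strict hglt hgL; omega) hind'
      rcases h1 with ⟨c₀, hgc₀, hc₀c, hc₀s, hc₀i⟩ | ⟨e₀, hge₀, he₀e, he₀s, he₀i⟩
      · exfalso
        have hv1 : δ u + δ g = δ c₀ + δ b := by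
          have := hd.val (hc₀c.trans heL : c₀ ≤ L) hbL
          rwa [hc₀s, hc₀i] at this
        have hv2 : δ u + δ (a ⊓ c) = δ a + δ c := by
          have := hd.val haL hcL
          rwa [hacu] at this
        have hv3 : δ u + δ z = δ c + δ e := by
          have := hd.val hcL heL; rwa [hce_s, hce_i] at this
        have hv4 : δ u + δ z = δ a + δ b := by
          have := hd.val haL hbL; rwa [hab_s, hab_i] at this
        have hm1 : δ c₀ ≤ δ e := hd.mono hc₀c heL
        have hm2 : δ z ≤ δ (a ⊓ c) := hd.mono (le_inf hza hzc) (inf_le_left.trans haL)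
        have hm3 : δ z < δ g := hd.strict hglt hgL
        omega
      · set e₀' := e₀ ⊓ c with he₀'def
        have he₀L : e₀ ≤ L := he₀e.trans (sup_le hcL hgL)
        have he₀d : e₀' ⊔ g = e₀ := by
          have h1 : (e₀ ⊓ c) ⊔ g = e₀ ⊓ (c ⊔ g) := inf_sup_assoc_of_le c hge₀
          rw [he₀'def, h1, inf_eq_left.mpr he₀e]
        have he₀'z : z ≤ e₀' := le_inf (hzg.trans hge₀) hzc
        have he₀'c : e₀' ≤ c := inf_le_right
        have he₀'g_i : e₀' ⊓ g = z := by
          refine le_antisymm ?_ (le_inf he₀'z hzg)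
          calc e₀' ⊓ g ≤ c ⊓ e := inf_le_inf inf_le_right inf_le_right
          _ = z := hce_i
        have he₀'s : e₀' ⊔ b = u := by
          have h2 : g ⊔ b = b := sup_eq_right.mpr hgb
          calc e₀' ⊔ b = e₀' ⊔ (g ⊔ b) := by rw [h2]
          _ = (e₀' ⊔ g) ⊔ b := by rw [sup_assoc]
          _ = e₀ ⊔ b := by rw [he₀d]
          _ = u := he₀s
        have hv1 : δ e₀ + δ z = δ e₀' + δ g := by
          have := hd.val (he₀'c.trans hcL) hgL
          rwa [he₀d, he₀'g_i] at this
        have hv2 : δ u + δ g = δ e₀ + δ b := by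
          have := hd.val he₀L hbL
          rwa [he₀s, he₀i] at this
        have hv3 : δ u + δ (e₀' ⊓ b) = δ e₀' + δ b := by
          have := hd.val (he₀'c.trans hcL) hbL
          rwa [he₀'s] at this
        have he₀'b : e₀' ⊓ b = z := by
          have := hd.eq_of (le_inf he₀'z hzb) (inf_le_left.trans (he₀'c.trans hcL))
            (by omega : δ (e₀' ⊓ b) ≤ δ z)
          exact this.symm
        exact Or.inl ⟨e₀', he₀'z, he₀'c, he₀'s, he₀'b⟩
    case pos =>
    -- case 5 : a ⊓ e = z gives the c-branch directly
    by_cases hy : a ⊓ e = z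
    case pos =>
      have hv1 : δ u + δ z = δ a + δ e := by
        have := hd.val haL heL; rwa [haeu, hy] at this
      have hv2 : δ u + δ z = δ c + δ e := by
        have := hd.val hcL heL; rwa [hce_s, hce_i] at this
      have hv3 : δ u + δ z = δ a + δ b := by
        have := hd.val haL hbL; rwa [hab_s, hab_i] at this
      have hcb_i : c ⊓ b = z := by rw [inf_comm]; exact hbcz
      have hv4 : δ (c ⊔ b) + δ z = δ c + δ b := by
        have := hd.val hcL hbL; rwa [hcb_i] at this
      have hcb_s : c ⊔ b = u := by
        refine hd.eq_of (sup_le hcu hbu) huL ?_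
        omega
      exact Or.inl ⟨c, hzc, le_rfl, hcb_s, hcb_i⟩
    case neg =>
    -- case 6 : a ⊓ c = z gives the e-branch directly
    by_cases hx : a ⊓ c = z
    case pos =>
      have hv1 : δ u + δ z = δ a + δ c := by
        have := hd.val haL hcL; rwa [hacu, hx] at this
      have hv2 : δ u + δ z = δ c + δ e := by
        have := hd.val hcL heL; rwa [hce_s, hce_i] at this
      have hv3 : δ u + δ z = δ a + δ b := by
        have := hd.val haL hbL; rwa [hab_s, hab_i] at this
      have heb_i : e ⊓ b = z := by rw [inf_comm]; exact hbez
      have hv4 : δ (e ⊔ b) + δ z = δ e + δ b := by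
        have := hd.val heL hbL; rwa [heb_i] at this
      have heb_s : e ⊔ b = u := by
        refine hd.eq_of (sup_le heu hbu) huL ?_
        omega
      exact Or.inr ⟨e, hze, le_rfl, heb_s, heb_i⟩
    case neg =>
    -- case 7 : impossible
    exact absurd (case7_false hd huL hza hzb hzc hze hab_i hab_s hce_i hce_s
      hacu haeu hbcz hbez hind hx hy) id

end Core

section RTsec

variable {M : Type*} [Lattice M] [IsModularLattice M] [OrderBot M] {L : M} {δ : M → ℕ}

lemma sup_eq_sup_erase {k : ℕ} (f : Fin k → M) (i : Fin k) :
    Finset.univ.sup f = f i ⊔ (Finset.univ.erase i).sup f := by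
  conv_lhs => rw [← Finset.insert_erase (Finset.mem_univ i)]
  rw [Finset.sup_insert]

lemma erase_zero_sup {k : ℕ} (f : Fin (k + 1) → M) :
    (Finset.univ.erase 0).sup f = Finset.univ.sup (f ∘ Fin.succ) := by
  rw [← Finset.sup_image]
  congr 1
  rw [Fin.image_succ_univ]
  ext j
  simp [Finset.mem_erase, Finset.mem_compl]

/-- The replacement theorem: an indecomposable direct complement can be
replaced by a member of any direct decomposition into indecomposables. -/
lemma RT (hd : DimFn L δ) :
    ∀ N : ℕ, ∀ u a b : M, ∀ r : ℕ, ∀ g : Fin r → M, u ≤ L → δ u ≤ N →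
      a ⊓ b = ⊥ → a ⊔ b = u → RIndec ⊥ a →
      (∀ j, RIndec ⊥ (g j)) → IndepFamily g → Finset.univ.sup g = u →
      ∃ j, g j ⊔ b = u ∧ g j ⊓ b = ⊥ := by
  intro N
  induction N with
  | zero =>
    intro u a b r g huL hN hab_i hab_s hinda hindg hfam hsup
    exfalso
    have hau : a ≤ u := hab_s ▸ le_sup_left
    have hu : u = ⊥ := hd.bot_of huL (by omega)
    have : a = ⊥ := le_antisymm (hu ▸ hau) bot_le
    exact absurd this.symm (ne_of_lt hinda.1)
  | succ N ih =>
    intro u a b r g huL hN hab_i hab_s hinda hindg hfam hsup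
    have hau : a ≤ u := hab_s ▸ le_sup_left
    have hbu : b ≤ u := hab_s ▸ le_sup_right
    have haL : a ≤ L := hau.trans huL
    have hbL : b ≤ L := hbu.trans huL
    cases r with
    | zero =>
      exfalso
      have hu : u = ⊥ := by rw [← hsup]; simp
      have : a = ⊥ := le_antisymm (hu ▸ hau) bot_le
      exact absurd this.symm (ne_of_lt hinda.1)
    | succ r =>
      set c := g 0 with hcdef
      set e := (Finset.univ.erase (0 : Fin (r + 1))).sup g with hedef
      have hce_s : c ⊔ e = u := by rw [← sup_eq_sup_erase g 0]; exact hsup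
      have hce_i : c ⊓ e = ⊥ := hfam 0
      have hcu : c ≤ u := hce_s ▸ le_sup_left
      have heu : e ≤ u := hce_s ▸ le_sup_right
      have hcL : c ≤ L := hcu.trans huL
      have heL : e ≤ L := heu.trans huL
      have hR2 := R2 hd (δ u) ⊥ u a b c e huL bot_le bot_le bot_le bot_le
        hab_i hab_s hce_i hce_s (by rw [hd.bot]; omega) hinda
      have habne : u ≠ b := by
        intro h
        have h2 : a ≤ b := h ▸ hau
        have h3 : a = ⊥ := by
          rw [← hab_i]; exact le_antisymm (le_inf le_rfl h2) inf_le_left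
        exact absurd h3.symm (ne_of_lt hinda.1)
      rcases hR2 with ⟨c₀, _, hc₀c, hc₀s, hc₀i⟩ | ⟨e₀, _, he₀e, he₀s, he₀i⟩
      · -- c branch : c itself replaces a
        have hcdec : c₀ ⊔ (c ⊓ b) = c := by
          have h1 : (c ⊓ b) ⊔ c₀ = c ⊓ (b ⊔ c₀) := inf_sup_assoc_of_le b hc₀c
          rw [sup_comm b c₀, hc₀s, inf_eq_left.mpr hcu] at h1
          rw [sup_comm]; exact h1
        have hmeet : c₀ ⊓ (c ⊓ b) = ⊥ :=
          le_antisymm (le_trans (inf_le_inf_left c₀ inf_le_right) hc₀i.le) bot_le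
        rcases (hindg 0).2 c₀ (c ⊓ b) bot_le bot_le hmeet hcdec with h0 | h0
        · exfalso
          apply habne
          rw [← hc₀s, h0, bot_sup_eq]
        · refine ⟨0, ?_, h0⟩
          have hc₀ : c = c₀ := by rw [← hcdec, h0, sup_bot_eq]
          show c ⊔ b = u
          rw [hc₀]; exact hc₀s
      · -- e branch : recurse into e
        have he₀u : e₀ ≤ u := he₀e.trans heu
        have he₀ne : e₀ ≠ ⊥ := by
          intro h0
          apply habne
          rw [← he₀s, h0, bot_sup_eq]
        set b' := e ⊓ b with hb'def
        have hedec : e₀ ⊔ b' = e := by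
          have h1 : (e ⊓ b) ⊔ e₀ = e ⊓ (b ⊔ e₀) := inf_sup_assoc_of_le b he₀e
          rw [sup_comm b e₀, he₀s, inf_eq_left.mpr heu] at h1
          rw [sup_comm]; exact h1
        have he₀b'_i : e₀ ⊓ b' = ⊥ :=
          le_antisymm (le_trans (inf_le_inf_left e₀ inf_le_right) he₀i.le) bot_le
        have hinde₀ : RIndec ⊥ e₀ := by
          refine RIndec.transfer (fun t => e₀ ⊓ (b ⊔ t)) (fun w => a ⊓ (b ⊔ w))
            (fun s t h => inf_le_inf_left e₀ (sup_le_sup_left h b))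
            (fun s t h => inf_le_inf_left a (sup_le_sup_left h b))
            (by show e₀ ⊓ (b ⊔ ⊥) = ⊥; rw [sup_bot_eq]; exact he₀i)
            (by show e₀ ⊓ (b ⊔ a) = e₀; rw [sup_comm b a, hab_s]; exact inf_eq_left.mpr he₀u)
            ?_ ?_ ?_ ?_ hinda
          · intro t hzt hta
            show a ⊓ (b ⊔ (e₀ ⊓ (b ⊔ t))) = t
            have h1 : b ⊔ (e₀ ⊓ (b ⊔ t)) = (b ⊔ e₀) ⊓ (b ⊔ t) :=
              (sup_inf_assoc_of_le e₀ (le_sup_left : b ≤ b ⊔ t)).symm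
            have h2 : b ⊔ e₀ = u := by rw [sup_comm]; exact he₀s
            have h3 : b ⊔ t ≤ u := sup_le hbu (hta.trans hau)
            have h4 : (t ⊔ b) ⊓ a = t ⊔ (b ⊓ a) := sup_inf_assoc_of_le b hta
            rw [h1, h2, inf_eq_right.mpr h3, inf_comm, sup_comm b t, h4, inf_comm b a,
              hab_i, sup_bot_eq]
          · intro w hzw hwe
            show e₀ ⊓ (b ⊔ (a ⊓ (b ⊔ w))) = w
            have h1 : b ⊔ (a ⊓ (b ⊔ w)) = (b ⊔ a) ⊓ (b ⊔ w) :=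
              (sup_inf_assoc_of_le a (le_sup_left : b ≤ b ⊔ w)).symm
            have h2 : b ⊔ a = u := by rw [sup_comm]; exact hab_s
            have h3 : b ⊔ w ≤ u := sup_le hbu (hwe.trans he₀u)
            have h4 : (w ⊔ b) ⊓ e₀ = w ⊔ (b ⊓ e₀) := sup_inf_assoc_of_le b hwe
            have h5 : b ⊓ e₀ = ⊥ := by rw [inf_comm]; exact he₀i
            rw [h1, h2, inf_eq_right.mpr h3, inf_comm, sup_comm b w, h4, h5, sup_bot_eq]
          · intro t _ _; exact ⟨bot_le, inf_le_left⟩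
          · intro w _ _; exact ⟨bot_le, inf_le_left⟩
        set g' : Fin r → M := fun j => g j.succ with hg'def
        have hsup' : Finset.univ.sup g' = e := by
          rw [hedef, erase_zero_sup]
          rfl
        have hindg' : ∀ j, RIndec ⊥ (g' j) := fun j => hindg j.succ
        have hfam' : IndepFamily g' := by
          intro i
          refine le_antisymm ?_ bot_le
          have hle : (Finset.univ.erase i).sup g' ≤ (Finset.univ.erase i.succ).sup g := by
            refine Finset.sup_le ?_
            intro j hj
            have hjne : j ≠ i := (Finset.mem_erase.mp hj).1
            have hmem : j.succ ∈ Finset.univ.erase i.succ :=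
              Finset.mem_erase.mpr ⟨fun h => hjne (Fin.succ_injective _ h), Finset.mem_univ _⟩
            exact Finset.le_sup hmem
          exact le_trans (inf_le_inf_left _ hle) (hfam i.succ).le
        have hcne : c ≠ ⊥ := fun h => absurd h.symm (ne_of_lt (hindg 0).1)
        have heN : δ e ≤ N := by
          have hv : δ u + δ (⊥ : M) = δ c + δ e := by
            have := hd.val hcL heL; rwa [hce_s, hce_i] at this
          have hc1 : 0 < δ c := by
            have := hd.strict (bot_lt_iff_ne_bot.mpr hcne) hcL
            rw [hd.bot] at this; omega
          rw [hd.bot] at hv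
          omega
        obtain ⟨j', hj's, hj'i⟩ :=
          ih e e₀ b' r g' heL heN he₀b'_i hedec hinde₀ hindg' hfam' hsup'
        have hgje : g j'.succ ≤ e := by
          have h1 : g' j' ≤ Finset.univ.sup g' := Finset.le_sup (Finset.mem_univ j')
          rw [hsup'] at h1
          exact h1
        refine ⟨j'.succ, ?_, ?_⟩
        · have h1 : b' ⊔ b = b := sup_eq_right.mpr inf_le_right
          have h2 : e ⊔ b = u := by
            refine le_antisymm (sup_le heu hbu) ?_
            rw [← he₀s]; exact sup_le (he₀e.trans le_sup_left) le_sup_right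
          calc g j'.succ ⊔ b = g j'.succ ⊔ (b' ⊔ b) := by rw [h1]
          _ = (g j'.succ ⊔ b') ⊔ b := by rw [sup_assoc]
          _ = e ⊔ b := by rw [show g j'.succ ⊔ b' = e from hj's]
          _ = u := h2
        · have h1 : g j'.succ ⊓ b = g j'.succ ⊓ b' := by
            refine le_antisymm
              (le_inf inf_le_left (le_inf (inf_le_left.trans hgje) inf_le_right)) ?_
            exact le_inf inf_le_left (inf_le_right.trans inf_le_right)
          rw [h1]
          exact hj'i

end RTsec

section Assembly

variable {M : Type*} [Lattice M] [IsModularLattice M] [OrderBot M] {L : M} {δ : M → ℕ}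

lemma pair_map_sup (σ σ' : M → M) {B B' : M} (hσm : Monotone σ) (hσ'm : Monotone σ')
    (hinv : ∀ t, t ≤ B → σ' (σ t) = t) (hinv' : ∀ w, w ≤ B' → σ (σ' w) = w)
    (hr : ∀ t, t ≤ B → σ t ≤ B') (hr' : ∀ w, w ≤ B' → σ' w ≤ B)
    {x y : M} (hx : x ≤ B) (hy : y ≤ B) : σ (x ⊔ y) = σ x ⊔ σ y := by
  refine le_antisymm ?_ (sup_le (hσm le_sup_left) (hσm le_sup_right))
  have hw : σ x ⊔ σ y ≤ B' := sup_le (hr x hx) (hr y hy)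
  have h1 : x ⊔ y ≤ σ' (σ x ⊔ σ y) := by
    refine sup_le ?_ ?_
    · exact le_trans (le_of_eq (hinv x hx).symm) (hσ'm le_sup_left)
    · exact le_trans (le_of_eq (hinv y hy).symm) (hσ'm le_sup_right)
  calc σ (x ⊔ y) ≤ σ (σ' (σ x ⊔ σ y)) := hσm h1
  _ = σ x ⊔ σ y := hinv' _ hw

lemma map_finset_sup {ι : Type*} [DecidableEq ι] (σ σ' : M → M) {B B' : M}
    (hσm : Monotone σ) (hσ'm : Monotone σ')
    (hinv : ∀ t, t ≤ B → σ' (σ t) = t) (hinv' : ∀ w, w ≤ B' → σ (σ' w) = w)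
    (hr : ∀ t, t ≤ B → σ t ≤ B') (hr' : ∀ w, w ≤ B' → σ' w ≤ B)
    (hbot : σ ⊥ = ⊥) (S : Finset ι) (f : ι → M) (hf : ∀ i ∈ S, f i ≤ B) :
    σ (S.sup f) = S.sup (fun i => σ (f i)) := by
  induction S using Finset.induction_on with
  | empty => simpa using hbot
  | @insert i S hi ih =>
    rw [Finset.sup_insert, Finset.sup_insert]
    rw [pair_map_sup σ σ' hσm hσ'm hinv hinv' hr hr' (hf i (Finset.mem_insert_self i S))
      (Finset.sup_le fun j hj => hf j (Finset.mem_insert_of_mem hj))]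
    rw [ih fun j hj => hf j (Finset.mem_insert_of_mem hj)]

lemma dim_sup_le (hd : DimFn L δ) {ι : Type*} [DecidableEq ι] (S : Finset ι) (f : ι → M)
    (hf : ∀ i ∈ S, f i ≤ L) : δ (S.sup f) ≤ ∑ i ∈ S, δ (f i) := by
  induction S using Finset.induction_on with
  | empty => simp [hd.bot]
  | @insert i S hi ih =>
    rw [Finset.sup_insert, Finset.sum_insert hi]
    have hSL : S.sup f ≤ L := Finset.sup_le fun j hj => hf j (Finset.mem_insert_of_mem hj)
    have hval := hd.val (hf i (Finset.mem_insert_self i S)) hSL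
    have hih := ih fun j hj => hf j (Finset.mem_insert_of_mem hj)
    omega

lemma indep_sum (hd : DimFn L δ) {k : ℕ} {f : Fin k → M} (hfL : ∀ i, f i ≤ L)
    (hfam : IndepFamily f) (S : Finset (Fin k)) :
    δ (S.sup f) = ∑ i ∈ S, δ (f i) := by
  induction S using Finset.induction_on with
  | empty => simp [hd.bot]
  | @insert i S hi ih =>
    rw [Finset.sup_insert, Finset.sum_insert hi]
    have hSL : S.sup f ≤ L := Finset.sup_le fun j _ => hfL j
    have hval := hd.val (hfL i) hSL
    have hmeet : f i ⊓ S.sup f = ⊥ := by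
      refine le_antisymm ?_ bot_le
      refine le_trans (inf_le_inf_left _ (Finset.sup_le fun j hj => Finset.le_sup ?_))
        (hfam i).le
      exact Finset.mem_erase.mpr ⟨fun h => hi (h ▸ hj), Finset.mem_univ _⟩
    rw [hmeet, hd.bot] at hval
    omega

lemma indep_of_sum (hd : DimFn L δ) {k : ℕ} {f : Fin k → M} {u : M} (huL : u ≤ L)
    (hfL : ∀ i, f i ≤ L) (hsup : Finset.univ.sup f = u)
    (hsum : ∑ i, δ (f i) ≤ δ u) : IndepFamily f := by
  intro i
  set s' := (Finset.univ.erase i).sup f with hs'def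
  have hs'L : s' ≤ L := Finset.sup_le fun j _ => hfL j
  have hs'le : δ s' ≤ ∑ j ∈ Finset.univ.erase i, δ (f j) :=
    dim_sup_le hd _ f fun j _ => hfL j
  have hjoin : f i ⊔ s' = u := by rw [← sup_eq_sup_erase]; exact hsup
  have hval := hd.val (hfL i) hs'L
  rw [hjoin] at hval
  have hsum' : δ (f i) + ∑ j ∈ Finset.univ.erase i, δ (f j) = ∑ j, δ (f j) :=
    Finset.add_sum_erase Finset.univ (fun j => δ (f j)) (Finset.mem_univ i)
  have hbot : δ (f i ⊓ s') = 0 := by omega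
  exact hd.bot_of (le_trans inf_le_left (hfL i)) hbot

/-- Equality of the number of components ("Krull–Remak part"). -/
lemma KR (hd : DimFn L δ) :
    ∀ N : ℕ, ∀ u : M, u ≤ L → δ u ≤ N → ∀ k r : ℕ, ∀ f : Fin k → M, ∀ g : Fin r → M,
      Finset.univ.sup f = u → Finset.univ.sup g = u →
      IndepFamily f → IndepFamily g →
      (∀ i, RIndec ⊥ (f i)) → (∀ j, RIndec ⊥ (g j)) → k = r := by
  have hzero : ∀ (k : ℕ) (f : Fin k → M), Finset.univ.sup f = (⊥ : M) →
      (∀ i, RIndec ⊥ (f i)) → k = 0 := by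
    intro k f hsup hind
    cases k with
    | zero => rfl
    | succ k =>
      exfalso
      have h1 : f 0 ≤ ⊥ := hsup ▸ Finset.le_sup (Finset.mem_univ 0)
      exact absurd (le_antisymm h1 bot_le).symm (ne_of_lt (hind 0).1)
  intro N
  induction N with
  | zero =>
    intro u huL hN k r f g hsupf hsupg hfamf hfamg hindf hindg
    have hu : u = ⊥ := hd.bot_of huL (by omega)
    rw [hzero k f (hu ▸ hsupf) hindf, hzero r g (hu ▸ hsupg) hindg]
  | succ N ih =>
    intro u huL hN k r f g hsupf hsupg hfamf hfamg hindf hindg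
    by_cases hu : u = ⊥
    · rw [hzero k f (hu ▸ hsupf) hindf, hzero r g (hu ▸ hsupg) hindg]
    cases k with
    | zero =>
      exfalso
      apply hu
      rw [← hsupf]; simp
    | succ k =>
    cases r with
    | zero =>
      exfalso
      apply hu
      rw [← hsupg]; simp
    | succ r =>
      set b := (Finset.univ.erase (0 : Fin (k + 1))).sup f with hbdef
      have hab_s : f 0 ⊔ b = u := by rw [← sup_eq_sup_erase]; exact hsupf
      have hab_i : f 0 ⊓ b = ⊥ := hfamf 0
      have hfL : ∀ i, f i ≤ L := fun i =>
        le_trans (hsupf ▸ Finset.le_sup (Finset.mem_univ i)) huL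
      have hgL : ∀ j, g j ≤ L := fun j =>
        le_trans (hsupg ▸ Finset.le_sup (Finset.mem_univ j)) huL
      have hbu : b ≤ u := hab_s ▸ le_sup_right
      have hbL : b ≤ L := hbu.trans huL
      obtain ⟨j, hjs, hji⟩ := RT hd (δ u) u (f 0) b (r + 1) g huL le_rfl
        hab_i hab_s (hindf 0) hindg hfamg hsupg
      set gj := g j with hgjdef
      set G := (Finset.univ.erase j).sup g with hGdef
      have hG_s : gj ⊔ G = u := by rw [← sup_eq_sup_erase]; exact hsupg
      have hG_i : gj ⊓ G = ⊥ := hfamg j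
      have hGu : G ≤ u := hG_s ▸ le_sup_right
      have hGL : G ≤ L := hGu.trans huL
      have hgju : gj ≤ u := hG_s ▸ le_sup_left
      set ψ : M → M := fun x => G ⊓ (gj ⊔ x) with hψdef
      set ψ' : M → M := fun w => b ⊓ (gj ⊔ w) with hψ'def
      have hψm : Monotone ψ := fun s t h => inf_le_inf_left G (sup_le_sup_left h gj)
      have hψ'm : Monotone ψ' := fun s t h => inf_le_inf_left b (sup_le_sup_left h gj)
      have hinv : ∀ t, t ≤ b → ψ' (ψ t) = t := by
        intro t htb
        show b ⊓ (gj ⊔ (G ⊓ (gj ⊔ t))) = t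
        have h1 : gj ⊔ (G ⊓ (gj ⊔ t)) = (gj ⊔ G) ⊓ (gj ⊔ t) :=
          (sup_inf_assoc_of_le G (le_sup_left : gj ≤ gj ⊔ t)).symm
        have h2 : gj ⊔ t ≤ u := sup_le hgju (htb.trans hbu)
        have h3 : (t ⊔ gj) ⊓ b = t ⊔ (gj ⊓ b) := sup_inf_assoc_of_le gj htb
        have h4 : gj ⊓ b = ⊥ := hji
        rw [h1, hG_s, inf_eq_right.mpr h2, inf_comm, sup_comm gj t, h3, h4, sup_bot_eq]
      have hinv' : ∀ w, w ≤ G → ψ (ψ' w) = w := by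
        intro w hwG
        show G ⊓ (gj ⊔ (b ⊓ (gj ⊔ w))) = w
        have h1 : gj ⊔ (b ⊓ (gj ⊔ w)) = (gj ⊔ b) ⊓ (gj ⊔ w) :=
          (sup_inf_assoc_of_le b (le_sup_left : gj ≤ gj ⊔ w)).symm
        have h2 : gj ⊔ w ≤ u := sup_le hgju (hwG.trans hGu)
        have h3 : (w ⊔ gj) ⊓ G = w ⊔ (gj ⊓ G) := sup_inf_assoc_of_le gj hwG
        rw [h1, hjs, inf_eq_right.mpr h2, inf_comm, sup_comm gj w, h3, hG_i, sup_bot_eq]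
      have hr : ∀ t, t ≤ b → ψ t ≤ G := fun t _ => inf_le_left
      have hr' : ∀ w, w ≤ G → ψ' w ≤ b := fun w _ => inf_le_left
      have hψbot : ψ ⊥ = ⊥ := by
        show G ⊓ (gj ⊔ ⊥) = ⊥
        rw [sup_bot_eq, inf_comm]
        exact hG_i
      have hψdim : ∀ x, x ≤ b → δ (ψ x) = δ x := by
        intro x hxb
        have hxL : x ≤ L := hxb.trans hbL
        have hjoin : G ⊔ (gj ⊔ x) = u := by
          refine le_antisymm (sup_le hGu (sup_le hgju (hxb.trans hbu))) ?_
          rw [← hG_s]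
          exact sup_le (le_trans le_sup_left le_sup_right) le_sup_left
        have hv1 : δ u + δ (ψ x) = δ G + δ (gj ⊔ x) := by
          have := hd.val hGL (sup_le (hgju.trans huL) hxL)
          rwa [hjoin] at this
        have hgjx : gj ⊓ x = ⊥ := by
          refine le_antisymm ?_ bot_le
          exact le_trans (inf_le_inf_left gj hxb) hji.le
        have hv2 : δ (gj ⊔ x) + δ (⊥ : M) = δ gj + δ x := by
          have := hd.val (hgju.trans huL) hxL
          rwa [hgjx] at this
        have hv3 : δ u + δ (⊥ : M) = δ gj + δ G := by
          have := hd.val (hgju.trans huL) hGL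
          rwa [hG_s, hG_i] at this
        rw [hd.bot] at hv2 hv3
        omega
      have hfsub : ∀ i : Fin k, f i.succ ≤ b := by
        intro i
        refine Finset.le_sup (Finset.mem_erase.mpr ⟨Fin.succ_ne_zero i, Finset.mem_univ _⟩)
      set f' : Fin k → M := fun i => ψ (f i.succ) with hf'def
      set g'' : Fin r → M := fun j' => g (j.succAbove j') with hg''def
      have hbsup : Finset.univ.sup (fun i : Fin k => f i.succ) = b := by
        rw [hbdef, erase_zero_sup]
        rfl
      have hsupf' : Finset.univ.sup f' = G := by
        have h2 := map_finset_sup ψ ψ' hψm hψ'm hinv hinv' hr hr' hψbot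
          Finset.univ (fun i : Fin k => f i.succ) (fun i _ => hfsub i)
        rw [hbsup] at h2
        have h3 : ψ b = G := by
          show G ⊓ (gj ⊔ b) = G
          rw [hjs]
          exact inf_eq_left.mpr hGu
        rw [← h2, h3]
      have hsupg'' : Finset.univ.sup g'' = G := by
        have h2 : Finset.univ.sup g'' = (Finset.image j.succAbove Finset.univ).sup g := by
          rw [Finset.sup_image]
          rfl
        rw [h2, Fin.image_succAbove_univ, hGdef]
        congr 1
        ext l
        simp [Finset.mem_erase, Finset.mem_compl]
      have hf'G : ∀ i, f' i ≤ G := fun i => inf_le_left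
      have hf'L : ∀ i, f' i ≤ L := fun i => (hf'G i).trans hGL
      have hsumf' : ∑ i, δ (f' i) ≤ δ G := by
        have h1 : ∀ i, δ (f' i) = δ (f i.succ) := fun i => hψdim _ (hfsub i)
        have h2 : ∑ i, δ (f' i) = ∑ i : Fin k, δ (f i.succ) := by
          exact Finset.sum_congr rfl fun i _ => h1 i
        have h3 : ∑ i : Fin k, δ (f i.succ) = ∑ l ∈ Finset.univ.erase 0, δ (f l) := by
          rw [show (Finset.univ.erase (0 : Fin (k+1))) = Finset.image Fin.succ Finset.univ by
            rw [Fin.image_succ_univ]; ext l; simp [Finset.mem_erase, Finset.mem_compl]]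
          rw [Finset.sum_image (fun x _ y _ h => Fin.succ_injective _ h)]
        have h4 : δ b = ∑ l ∈ Finset.univ.erase 0, δ (f l) :=
          indep_sum hd hfL hfamf _
        have h5 : δ u + δ (⊥ : M) = δ gj + δ G := by
          have := hd.val (hgju.trans huL) hGL
          rwa [hG_s, hG_i] at this
        have h6 : δ u + δ (⊥ : M) = δ (f 0) + δ b := by
          have := hd.val (hfL 0) hbL
          rwa [hab_s, hab_i] at this
        have h7 : δ u + δ (⊥ : M) = δ gj + δ b := by
          have := hd.val (hgju.trans huL) hbL
          rwa [hjs, hji] at this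
        rw [hd.bot] at h5 h6 h7
        omega
      have hfamf' : IndepFamily f' := indep_of_sum hd hGL hf'L hsupf' hsumf'
      have hindf' : ∀ i, RIndec ⊥ (f' i) := by
        intro i
        refine RIndec.transfer ψ ψ' hψm hψ'm hψbot rfl ?_ ?_ ?_ ?_ (hindf i.succ)
        · intro t _ hta; exact hinv t (hta.trans (hfsub i))
        · intro w _ hwf'; exact hinv' w (hwf'.trans (hf'G i))
        · intro t _ hta; exact ⟨bot_le, hψm hta⟩
        · intro w _ hwf'
          refine ⟨bot_le, ?_⟩
          have h1 : ψ' w ≤ ψ' (f' i) := hψ'm hwf'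
          have h2 : ψ' (f' i) = f i.succ := hinv _ (hfsub i)
          rw [h2] at h1
          exact h1
      have hfamg'' : IndepFamily g'' := by
        intro i
        refine le_antisymm ?_ bot_le
        have hle : (Finset.univ.erase i).sup g'' ≤
            (Finset.univ.erase (j.succAbove i)).sup g := by
          refine Finset.sup_le ?_
          intro l hl
          have hlne : l ≠ i := (Finset.mem_erase.mp hl).1
          have hmem : j.succAbove l ∈ Finset.univ.erase (j.succAbove i) :=
            Finset.mem_erase.mpr
              ⟨fun h => hlne (Fin.succAbove_right_injective h), Finset.mem_univ _⟩
          exact Finset.le_sup hmem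
        exact le_trans (inf_le_inf_left _ hle) (hfamg (j.succAbove i)).le
      have hindg'' : ∀ i, RIndec ⊥ (g'' i) := fun i => hindg (j.succAbove i)
      have hgjne : gj ≠ ⊥ := fun h => absurd h.symm (ne_of_lt (hindg j).1)
      have hGN : δ G ≤ N := by
        have h5 : δ u + δ (⊥ : M) = δ gj + δ G := by
          have := hd.val (hgju.trans huL) hGL
          rwa [hG_s, hG_i] at this
        have hc1 : 0 < δ gj := by
          have := hd.strict (bot_lt_iff_ne_bot.mpr hgjne) (hgju.trans huL)
          rw [hd.bot] at this; omega
        rw [hd.bot] at h5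
        omega
      have := ih G hGL hGN k r f' g'' hsupf' hsupg'' hfamf' hfamg'' hindf' hindg''
      omega

end Assembly



end OreProof


/-- Ore's theorem on direct decompositions: in a modular lattice with ⊥, if an
element `L` with a finite maximal chain from ⊥ has two direct
join-decompositions into directly indecomposable components, then the numbers
of components agree, and each component of the first decomposition can be
exchanged for a suitable component of the second, again giving a direct
join-decomposition of `L`. -/
theorem ore_direct_decomposition
    {M : Type*} [Lattice M] [IsModularLattice M] [OrderBot M]
    (L : M) (n : ℕ) (a : Fin (n + 1) → M)
    (ha0 : a 0 = ⊥) (haL : a (Fin.last n) = L)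
    (hacov : ∀ i : Fin n, a i.castSucc ⋖ a i.succ)
    (k r : ℕ) (Lf : Fin k → M) (Mf : Fin r → M)
    (hLsup : Finset.univ.sup Lf = L)
    (hMsup : Finset.univ.sup Mf = L)
    (hLindep : IndepFamily Lf)
    (hMindep : IndepFamily Mf)
    (hLind : ∀ i, DirectlyIndecomposable (Lf i))
    (hMind : ∀ j, DirectlyIndecomposable (Mf j)) :
    k = r ∧ ∀ i : Fin k, ∃ j : Fin r,
      Finset.univ.sup (Function.update Lf i (Mf j)) = L ∧
      IndepFamily (Function.update Lf i (Mf j)) := by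
  classical
  have key : ∀ m : ℕ, m ≤ n → OreProof.Rk (a ⟨n - m, by omega⟩) L m := by
    intro m
    induction m with
    | zero =>
      intro _
      have h1 : (⟨n - 0, by omega⟩ : Fin (n + 1)) = Fin.last n := by
        ext
        simp [Fin.last]
      rw [h1, haL]
      exact OreProof.Rk.refl L
    | succ m ihm =>
      intro hm
      have hm' : m ≤ n := by omega
      have hlt : n - (m + 1) < n := by omega
      have hcov := hacov ⟨n - (m + 1), hlt⟩
      have h1 : (⟨n - (m + 1), hlt⟩ : Fin n).castSucc =
          (⟨n - (m + 1), by omega⟩ : Fin (n + 1)) := by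
        ext
        simp [Fin.castSucc, Fin.castAdd, Fin.castLE]
      have h2 : (⟨n - (m + 1), hlt⟩ : Fin n).succ = (⟨n - m, by omega⟩ : Fin (n + 1)) := by
        ext
        simp [Fin.succ]
        omega
      rw [h1, h2] at hcov
      exact OreProof.Rk.step hcov (ihm hm')
  have hchain : OreProof.Rk (⊥ : M) L n := by
    have h := key n le_rfl
    have h1 : (⟨n - n, by omega⟩ : Fin (n + 1)) = 0 := by
      ext
      simp
    rwa [h1, ha0] at h
  set δ := OreProof.dimOf L with hδdef
  have hd : OreProof.DimFn L δ := OreProof.dimfn_of_rk hchain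
  have hLfL : ∀ i, Lf i ≤ L := fun i => hLsup ▸ Finset.le_sup (Finset.mem_univ i)
  have hMfL : ∀ j, Mf j ≤ L := fun j => hMsup ▸ Finset.le_sup (Finset.mem_univ j)
  have hrind : ∀ {x : M}, DirectlyIndecomposable x → OreProof.RIndec ⊥ x := by
    rintro x ⟨hne, hnex⟩
    refine ⟨bot_lt_iff_ne_bot.mpr hne, ?_⟩
    intro p q _ _ hpq hspq
    by_contra hc
    push_neg at hc
    exact hnex ⟨p, q, hc.1, hc.2, hpq, hspq.symm⟩
  constructor
  · exact OreProof.KR hd (δ L) L le_rfl le_rfl k r Lf Mf hLsup hMsup hLindep hMindep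
      (fun i => hrind (hLind i)) (fun j => hrind (hMind j))
  · intro i
    set b := (Finset.univ.erase i).sup Lf with hbdef
    have hab_s : Lf i ⊔ b = L := by rw [← OreProof.sup_eq_sup_erase]; exact hLsup
    have hab_i : Lf i ⊓ b = ⊥ := hLindep i
    have hbL : b ≤ L := Finset.sup_le fun l _ => hLfL l
    obtain ⟨j, hjs, hji⟩ := OreProof.RT hd (δ L) L (Lf i) b r Mf le_rfl le_rfl
      hab_i hab_s (hrind (hLind i)) (fun j => hrind (hMind j)) hMindep hMsup
    have hsup' : Finset.univ.sup (Function.update Lf i (Mf j)) = L := by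
      have h1 : (Finset.univ.erase i).sup (Function.update Lf i (Mf j)) = b := by
        rw [hbdef]
        refine Finset.sup_congr rfl ?_
        intro l hl
        exact Function.update_of_ne (Finset.mem_erase.mp hl).1 _ _
      rw [OreProof.sup_eq_sup_erase (Function.update Lf i (Mf j)) i, h1,
        Function.update_self]
      exact hjs
    refine ⟨j, hsup', ?_⟩
    have hupL : ∀ l, Function.update Lf i (Mf j) l ≤ L := by
      intro l
      by_cases h : l = i
      · subst h; rw [Function.update_self]; exact hMfL j
      · rw [Function.update_of_ne h]; exact hLfL l
    have hsum1 : ∑ l, δ (Function.update Lf i (Mf j) l) =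
        δ (Mf j) + ∑ l ∈ Finset.univ.erase i, δ (Lf l) := by
      have h0 : (fun l => δ (Function.update Lf i (Mf j) l)) =
          Function.update (fun l => δ (Lf l)) i (δ (Mf j)) := by
        funext l
        by_cases h : l = i
        · subst h; rw [Function.update_self, Function.update_self]
        · rw [Function.update_of_ne h, Function.update_of_ne h]
      rw [h0, Finset.sum_update_of_mem (Finset.mem_univ i)]
      congr 1
      rw [← Finset.erase_eq]
    have hsum2 : δ b = ∑ l ∈ Finset.univ.erase i, δ (Lf l) :=
      OreProof.indep_sum hd hLfL hLindep _
    have hsum3 : δ L + δ (⊥ : M) = δ (Mf j) + δ b := by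
      have := hd.val (hMfL j) hbL
      rwa [hjs, hji] at this
    refine OreProof.indep_of_sum hd le_rfl hupL hsup' ?_
    rw [hd.bot] at hsum3
    omega
end

section
/- Lemma 2 (compatibility with right common multiples): let R be a ring with no zero divisors. Suppose X·M = Y·R₀ and X·L = Y·Q with Y ≠ 0, and suppose M·X̄ = L·Ȳ for some X̄, Ȳ ∈ R. Then R₀·X̄ = Q·Ȳ. -/
/-- Lemma 2: in a ring with no zero divisors, if `X·M = Y·R₀`, `X·L = Y·Q`
with `Y ≠ 0`, and `M·X̄ = L·Ȳ` is a right common multiple of `M` and `L`,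
then `R₀·X̄ = Q·Ȳ`. -/
theorem divisor_couple_right_multiple
    {R : Type*} [Ring R] [NoZeroDivisors R]
    (X Y M L R₀ Q Xbar Ybar : R)
    (hY : Y ≠ 0)
    (h1 : X * M = Y * R₀)
    (h2 : X * L = Y * Q)
    (h3 : M * Xbar = L * Ybar) :
    R₀ * Xbar = Q * Ybar := by
  refine mul_left_cancel₀ hY ?_
  calc Y * (R₀ * Xbar) = X * (M * Xbar) := by rw [← mul_assoc, ← h1, mul_assoc]
    _ = X * (L * Ybar) := by rw [h3]
    _ = Y * (Q * Ybar) := by rw [← mul_assoc, h2, mul_assoc]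
end

section
/- Transitivity step in Lemma 3: let R be a domain satisfying the left Ore condition. Suppose X, X₁, Y₁, X₂, R₀ ∈ R are nonzero and the following equations hold for elements M, L, Q, M₁, Q₁, Y, Y₂ ∈ R: X·M = Y·R₀, X·L = Y·Q, X₁·M = Y₁·M₁, X₁·L = Y₁·Q₁, and X₂·M₁ = Y₂·R₀. Then X₂·Q₁ = Y₂·Q. -/
/-!
A left Ore domain embeds in its division ring of left fractions. There the relations
`X * M = Y * R₀` and `X₁ * M = Y₁ * M₁` solve to `M₁ = Y₁⁻¹ * X₁ * X⁻¹ * Y * R₀`, and likewise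
`Q₁ = Y₁⁻¹ * X₁ * X⁻¹ * Y * Q`. With `T = X₂ * Y₁⁻¹ * X₁ * X⁻¹ * Y` this gives
`X₂ * M₁ = T * R₀` and `X₂ * Q₁ = T * Q`; cancelling `R₀` in `X₂ * M₁ = Y₂ * R₀` yields `Y₂ = T`.
-/

open nonZeroDivisors OreLocalization

universe u

theorem exists_mul_eq_mul_of_leftOre {R : Type*} [Ring R] [IsDomain R]
    (ore : ∀ a b : R, a ≠ 0 → b ≠ 0 → ∃ c d : R, c * a = d * b ∧ c * a ≠ 0)
    (r : R) (s : R⁰) : ∃ (r' : R) (s' : R⁰), s' * r = r' * s := by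
  rcases eq_or_ne r 0 with rfl | hr
  · exact ⟨0, 1, by simp⟩
  obtain ⟨c, d, hcd, hc⟩ := ore r s hr (nonZeroDivisors.coe_ne_zero s)
  exact ⟨d, ⟨c, mem_nonZeroDivisors_of_ne_zero (left_ne_zero_of_mul hc)⟩, hcd⟩

theorem exists_injective_ringHom_divisionRing_of_leftOre {R : Type u} [Ring R] [IsDomain R]
    (ore : ∀ a b : R, a ≠ 0 → b ≠ 0 → ∃ c d : R, c * a = d * b ∧ c * a ≠ 0) :
    ∃ (D : Type u) (_ : DivisionRing D) (f : R →+* D), Function.Injective f := by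
  obtain ⟨_⟩ : Nonempty (OreSet R⁰) :=
    nonempty_oreSet_iff_of_noZeroDivisors.mpr (exists_mul_eq_mul_of_leftOre ore)
  exact ⟨R[R⁰⁻¹], inferInstance, numeratorRingHom, numeratorHom_inj fun _ h ↦ h.1⟩

section GroupWithZero

variable {G : Type*} [GroupWithZero G]

theorem eq_inv_mul_mul_inv_mul_of_mul_eq_mul {X Y X₁ Y₁ M N N₁ : G} (hX : X ≠ 0) (hY₁ : Y₁ ≠ 0)
    (h : X * M = Y * N) (h₁ : X₁ * M = Y₁ * N₁) : N₁ = Y₁⁻¹ * X₁ * X⁻¹ * Y * N := by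
  rw [← eq_inv_mul_iff_mul_eq₀ hX] at h
  rw [← inv_mul_eq_iff_eq_mul₀ hY₁] at h₁
  rw [← h₁, h]
  simp only [mul_assoc]

theorem mul_eq_mul_of_divisorCouple {X X₁ Y₁ X₂ R₀ M L Q M₁ Q₁ Y Y₂ : G}
    (hX : X ≠ 0) (hY₁ : Y₁ ≠ 0) (hR₀ : R₀ ≠ 0)
    (h1 : X * M = Y * R₀) (h2 : X * L = Y * Q) (h3 : X₁ * M = Y₁ * M₁) (h4 : X₁ * L = Y₁ * Q₁)
    (h5 : X₂ * M₁ = Y₂ * R₀) :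
    X₂ * Q₁ = Y₂ * Q := by
  have hM₁ := eq_inv_mul_mul_inv_mul_of_mul_eq_mul hX hY₁ h1 h3
  have hQ₁ := eq_inv_mul_mul_inv_mul_of_mul_eq_mul hX hY₁ h2 h4
  have hY₂ : Y₂ = X₂ * (Y₁⁻¹ * X₁ * X⁻¹ * Y) := by
    refine mul_right_cancel₀ hR₀ ?_
    rw [← h5, hM₁]
    simp only [mul_assoc]
  rw [hQ₁, hY₂]
  simp only [mul_assoc]

end GroupWithZero

theorem divisor_couple_transitivity_general
    {R : Type*} [Ring R] [IsDomain R]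
    (ore : ∀ a b : R, a ≠ 0 → b ≠ 0 → ∃ c d : R, c * a = d * b ∧ c * a ≠ 0)
    (X X₁ Y₁ X₂ R₀ M L Q M₁ Q₁ Y Y₂ : R)
    (hX : X ≠ 0) (hY₁ : Y₁ ≠ 0) (hR₀ : R₀ ≠ 0)
    (h1 : X * M = Y * R₀)
    (h2 : X * L = Y * Q)
    (h3 : X₁ * M = Y₁ * M₁)
    (h4 : X₁ * L = Y₁ * Q₁)
    (h5 : X₂ * M₁ = Y₂ * R₀) :
    X₂ * Q₁ = Y₂ * Q := by
  obtain ⟨D, _, f, hf⟩ := exists_injective_ringHom_divisionRing_of_leftOre ore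
  apply hf
  apply_fun f at h1 h2 h3 h4 h5
  simp only [map_mul] at h1 h2 h3 h4 h5 ⊢
  exact mul_eq_mul_of_divisorCouple ((map_ne_zero_iff f hf).2 hX) ((map_ne_zero_iff f hf).2 hY₁)
    ((map_ne_zero_iff f hf).2 hR₀) h1 h2 h3 h4 h5

/-- Transitivity step in Lemma 3: in a domain with the left Ore condition, if
`(L, R₀)` is a generalized divisor couple for `M` (via `X, Y, Q`), `M₁` lies
in the right divisor ideal paired with `L` (via `X₁, Y₁, Q₁`), and
`X₂·M₁ = Y₂·R₀`, then `X₂·Q₁ = Y₂·Q`. -/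
theorem divisor_couple_transitivity
    {R : Type*} [Ring R] [IsDomain R]
    (ore : ∀ a b : R, a ≠ 0 → b ≠ 0 → ∃ c d : R, c * a = d * b ∧ c * a ≠ 0)
    (X X₁ Y₁ X₂ R₀ M L Q M₁ Q₁ Y Y₂ : R)
    (hX : X ≠ 0) (hX₁ : X₁ ≠ 0) (hY₁ : Y₁ ≠ 0) (hX₂ : X₂ ≠ 0) (hR₀ : R₀ ≠ 0)
    (h1 : X * M = Y * R₀)
    (h2 : X * L = Y * Q)
    (h3 : X₁ * M = Y₁ * M₁)
    (h4 : X₁ * L = Y₁ * Q₁)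
    (h5 : X₂ * M₁ = Y₂ * R₀) :
    X₂ * Q₁ = Y₂ * Q :=
  divisor_couple_transitivity_general ore X X₁ Y₁ X₂ R₀ M L Q M₁ Q₁ Y Y₂ hX hY₁ hR₀ h1 h2 h3 h4 h5
end

section
/- Converse step in Lemma 3: let R be a domain satisfying the left Ore condition. Suppose X₁, Y₁, X₂ ∈ R are nonzero and X₁·M = Y₁·M₁, X₁·L = Y₁·Q₁, X₂·M₁ = Y₂·R₀, and X₂·Q₁ = Y₂·Q hold for elements M, L, M₁, Q₁, R₀, Q, Y₂ ∈ R. Then there exist U, V ∈ R with U ≠ 0 such that U·M = V·R₀ and U·L = V·Q. -/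
theorem mul_mul_eq_mul_mul_of_mul_eq_mul {S : Type*} [Semigroup S] {c d X₁ Y₁ X₂ Y₂ a b e : S}
    (hcd : c * Y₁ = d * X₂) (h₁ : X₁ * a = Y₁ * b) (h₂ : X₂ * b = Y₂ * e) :
    c * X₁ * a = d * Y₂ * e :=
  calc c * X₁ * a = c * Y₁ * b := by rw [mul_assoc, h₁, ← mul_assoc]
    _ = d * X₂ * b := by rw [hcd]
    _ = d * Y₂ * e := by rw [mul_assoc, h₂, ← mul_assoc]

/-- Converse step in Lemma 3: in a domain with the left Ore condition, if
`X₁·M = Y₁·M₁`, `X₁·L = Y₁·Q₁`, `X₂·M₁ = Y₂·R₀` and `X₂·Q₁ = Y₂·Q`, then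
there is a nonzero `U` and a `V` with `U·M = V·R₀` and `U·L = V·Q`, i.e.
`(L, R₀)` is a generalized divisor couple for `M`. -/
theorem divisor_couple_converse
    {R : Type*} [Ring R] [IsDomain R]
    (ore : ∀ a b : R, a ≠ 0 → b ≠ 0 → ∃ c d : R, c * a = d * b ∧ c * a ≠ 0)
    (X₁ Y₁ X₂ M L M₁ Q₁ R₀ Q Y₂ : R)
    (hX₁ : X₁ ≠ 0) (hY₁ : Y₁ ≠ 0) (hX₂ : X₂ ≠ 0)
    (h1 : X₁ * M = Y₁ * M₁)
    (h2 : X₁ * L = Y₁ * Q₁)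
    (h3 : X₂ * M₁ = Y₂ * R₀)
    (h4 : X₂ * Q₁ = Y₂ * Q) :
    ∃ U V : R, U ≠ 0 ∧ U * M = V * R₀ ∧ U * L = V * Q := by
  obtain ⟨c, d, hcd, hcY₁⟩ := ore Y₁ X₂ hY₁ hX₂
  exact ⟨c * X₁, d * Y₂, mul_ne_zero (left_ne_zero_of_mul hcY₁) hX₁,
    mul_mul_eq_mul_mul_of_mul_eq_mul hcd h1 h3, mul_mul_eq_mul_mul_of_mul_eq_mul hcd h2 h4⟩
end
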